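/- arXiv:2107.09813 — 3 statements merged into one kernel-verified Lean document; each statement's English description precedes it below -/
import Mathlib

section
/- Let μ be an inner node of T, let φ, φ* ∈ KP(μ), and let γ, γ* ∈ Λ∪{∞} with γ > μ(φ) and γ* > μ(φ*). Then [μ; φ, γ] = [μ; φ*, γ*] if and only if γ = γ* and μ(φ* − φ) ≥ γ. In this case, φ ∼_μ φ*. -/
open Polynomial

namespace MLV

variable {K : Type*} [Field K] {Λ : Type*} [AddCommGroup Λ] [LinearOrder Λ] [IsOrderedAddMonoid Λ]

/-- A valuation on the field `K` with values in `Λ∞ = WithTop Λ`. -/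
structure FieldVal (K : Type*) (Λ : Type*) [Field K] [AddCommGroup Λ] [LinearOrder Λ] [IsOrderedAddMonoid Λ] where
  v : K → WithTop Λ
  map_one' : v 1 = 0
  map_zero' : v 0 = ⊤
  ne_top' : ∀ a : K, a ≠ 0 → v a ≠ ⊤
  map_mul' : ∀ a b : K, v (a * b) = v a + v b
  map_add' : ∀ a b : K, min (v a) (v b) ≤ v (a + b)

/-- `μ` is a node of the tree `T = T(Λ)`: a valuation on `K[x]` with values in `Λ∞`
whose restriction to `K` is `v`. -/
def IsValT (v : FieldVal K Λ) (μ : Polynomial K → WithTop Λ) : Prop :=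
  μ 1 = 0 ∧ μ 0 = ⊤ ∧ (∀ f g : Polynomial K, μ (f * g) = μ f + μ g) ∧
    (∀ f g : Polynomial K, min (μ f) (μ g) ≤ μ (f + g)) ∧
    ∀ a : K, μ (C a) = v.v a

/-- `g ∼_μ h` : `μ(g - h) > μ(g)`. -/
def MuEquiv (μ : Polynomial K → WithTop Λ) (g h : Polynomial K) : Prop :=
  μ g < μ (g - h)

/-- `h ∣_μ g` : `g ∼_μ f * h` for some `f`. -/
def MuDvd (μ : Polynomial K → WithTop Λ) (h g : Polynomial K) : Prop :=
  ∃ f : Polynomial K, MuEquiv μ g (f * h)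

/-- `g ∈ K[x] \ K` is `μ`-minimal if it `μ`-divides no nonzero polynomial of smaller degree. -/
def IsMuMinimal (μ : Polynomial K → WithTop Λ) (g : Polynomial K) : Prop :=
  0 < g.natDegree ∧
    ∀ f : Polynomial K, f ≠ 0 → f.degree < g.degree → ¬ MuDvd μ g f

/-- `g` is `μ`-irreducible. -/
def IsMuIrreducible (μ : Polynomial K → WithTop Λ) (g : Polynomial K) : Prop :=
  μ g ≠ ⊤ ∧ (¬ ∃ f : Polynomial K, MuEquiv μ (f * g) 1) ∧
    ∀ f h : Polynomial K, MuDvd μ g (f * h) → MuDvd μ g f ∨ MuDvd μ g h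

/-- A (Maclane-Vaquié) key polynomial for `μ`. -/
def IsKeyPol (μ : Polynomial K → WithTop Λ) (φ : Polynomial K) : Prop :=
  φ.Monic ∧ IsMuMinimal μ φ ∧ IsMuIrreducible μ φ

/-- An inner node: a valuation admitting key polynomials. -/
def IsInnerNode (μ : Polynomial K → WithTop Λ) : Prop :=
  ∃ φ : Polynomial K, IsKeyPol μ φ

/-- `deg(μ)`: the minimal degree of a key polynomial for `μ`. -/
noncomputable def degOf (μ : Polynomial K → WithTop Λ) : ℕ :=
  sInf {n : ℕ | ∃ φ : Polynomial K, IsKeyPol μ φ ∧ φ.natDegree = n}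

/-- A key polynomial of minimal degree. -/
def IsMinKeyPol (μ : Polynomial K → WithTop Λ) (φ : Polynomial K) : Prop :=
  IsKeyPol μ φ ∧ ∀ ψ : Polynomial K, IsKeyPol μ ψ → φ.natDegree ≤ ψ.natDegree

/-- the class `[φ]_μ` of key polynomials `μ`-equivalent to `φ`. -/
def KeyPolClass (μ : Polynomial K → WithTop Λ) (φ : Polynomial K) : Set (Polynomial K) :=
  {ψ : Polynomial K | IsKeyPol μ ψ ∧ MuEquiv μ ψ φ}

/-- The coefficient `a_s` of the `φ`-expansion `f = Σ_s a_s φ^s` (for `φ` monic nonconstant). -/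
noncomputable def expCoeff (φ f : Polynomial K) (s : ℕ) : Polynomial K :=
  (f /ₘ φ ^ s) %ₘ φ

/-- The augmented valuation `[μ; φ, γ]`, acting on `φ`-expansions by
`ν(Σ_s a_s φ^s) = min_s (μ(a_s) + s γ)`. -/
noncomputable def augVal (μ : Polynomial K → WithTop Λ) (φ : Polynomial K)
    (γ : WithTop Λ) (f : Polynomial K) : WithTop Λ :=
  (Finset.range (f.natDegree + 1)).inf'
    (Finset.nonempty_range_iff.mpr (Nat.succ_ne_zero _))
    fun s => μ (expCoeff φ f s) + s • γ

/-- The depth-zero valuation `ω_{a,δ}`, acting on `(x-a)`-expansions by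
`ω(Σ_s a_s (x-a)^s) = min_s (v(a_s) + s δ)`. -/
noncomputable def omegaVal (v : FieldVal K Λ) (a : K) (δ : WithTop Λ)
    (f : Polynomial K) : WithTop Λ :=
  (Finset.range (f.natDegree + 1)).inf'
    (Finset.nonempty_range_iff.mpr (Nat.succ_ne_zero _))
    fun s => v.v ((taylor a f).coeff s) + s • δ

/-- The tangent direction `t(μ,ν)`: monic polynomials of minimal degree with `μ(φ) < ν(φ)`. -/
def TangentDir (μ ν : Polynomial K → WithTop Λ) : Set (Polynomial K) :=
  {φ : Polynomial K | φ.Monic ∧ μ φ < ν φ ∧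
    ∀ ψ : Polynomial K, ψ.Monic → μ ψ < ν ψ → φ.natDegree ≤ ψ.natDegree}

/-- The set of finite values of `μ`. -/
def valSet (μ : Polynomial K → WithTop Λ) : Set Λ :=
  {γ : Λ | ∃ f : Polynomial K, μ f = (γ : WithTop Λ)}

/-- The value group `Γ_μ`. -/
def valGroup (μ : Polynomial K → WithTop Λ) : AddSubgroup Λ :=
  AddSubgroup.closure (valSet μ)

/-- `Γ = v(K^*)` as a subset of `Λ`. -/
def gammaSet (v : FieldVal K Λ) : Set Λ :=
  {γ : Λ | ∃ a : K, v.v a = (γ : WithTop Λ)}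

/-- The value group `Γ` of the base field valuation. -/
def baseGroup (v : FieldVal K Λ) : AddSubgroup Λ :=
  AddSubgroup.closure (gammaSet v)

/-- `μ` is commensurable over `v` : `Γ_μ/Γ` is torsion. -/
def IsCommensurable (v : FieldVal K Λ) (μ : Polynomial K → WithTop Λ) : Prop :=
  ∀ γ : Λ, γ ∈ valGroup μ → ∃ n : ℕ, 0 < n ∧ n • γ ∈ baseGroup v

/-- `Γ_μ^0 = {μ(a) : a ∈ K[x], 0 ≤ deg(a) < deg(μ)}`. -/
noncomputable def degZeroSet (μ : Polynomial K → WithTop Λ) : Set Λ :=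
  {δ : Λ | ∃ a : Polynomial K, a ≠ 0 ∧ a.natDegree < degOf μ ∧ μ a = (δ : WithTop Λ)}

/-- Equivalence of valuations: an order-preserving isomorphism `ι : Γ_μ → Γ_ν`
with `ν = ι ∘ μ`. -/
def ValEquiv (μ ν : Polynomial K → WithTop Λ) : Prop :=
  ∃ ι : valGroup μ ≃+ valGroup ν,
    Monotone ι ∧ (∀ f : Polynomial K, μ f = ⊤ ↔ ν f = ⊤) ∧
    ∀ (f : Polynomial K) (γ : Λ) (h : μ f = (γ : WithTop Λ)),
      ν f = ((ι ⟨γ, AddSubgroup.subset_closure ⟨f, h⟩⟩ : Λ) : WithTop Λ)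

/-- `β ∼_sme γ` : an order-preserving isomorphism `⟨Γ,β⟩ → ⟨Γ,γ⟩` fixing `Γ`
and mapping `β` to `γ`. -/
def SmeEquiv (v : FieldVal K Λ) (β γ : Λ) : Prop :=
  ∃ ι : (AddSubgroup.closure (gammaSet v ∪ {β}) : AddSubgroup Λ) ≃+
      (AddSubgroup.closure (gammaSet v ∪ {γ}) : AddSubgroup Λ),
    Monotone ι ∧
    (∀ (a : Λ) (ha : a ∈ gammaSet v),
      ((ι ⟨a, AddSubgroup.subset_closure (Set.mem_union_left _ ha)⟩ : Λ) = a)) ∧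
    ((ι ⟨β, AddSubgroup.subset_closure (Set.mem_union_right _ rfl)⟩ : Λ) = γ)

section Families

variable {ι : Type*} [LinearOrder ι]

/-- A totally ordered family of inner nodes of `T`, indexed order-isomorphically by a
totally ordered set, containing no maximal element. -/
def IsTOFamily (v : FieldVal K Λ) (ρ : ι → Polynomial K → WithTop Λ) : Prop :=
  (∀ i, IsValT v (ρ i)) ∧ (∀ i, IsInnerNode (ρ i)) ∧ StrictMono ρ ∧
    ∀ i : ι, ∃ j : ι, i < j

/-- `f` is `A`-stable: the values `ρ_i(f)` are eventually constant. -/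
def IsStablePoly (ρ : ι → Polynomial K → WithTop Λ) (f : Polynomial K) : Prop :=
  ∃ i : ι, ∀ j : ι, i ≤ j → ρ j f = ρ i f

/-- `β` is the stable value `ρ_A(f)`. -/
def IsStableVal (ρ : ι → Polynomial K → WithTop Λ) (f : Polynomial K)
    (β : WithTop Λ) : Prop :=
  ∃ i : ι, ∀ j : ι, i ≤ j → ρ j f = β

open Classical in
/-- The stability function `ρ_A` (junk value `⊤` on unstable polynomials). -/
noncomputable def stableVal (ρ : ι → Polynomial K → WithTop Λ) (f : Polynomial K) :
    WithTop Λ :=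
  if h : ∃ β : WithTop Λ, IsStableVal ρ f β then h.choose else ⊤

/-- The family has stable degree `m`. -/
def HasStableDeg (ρ : ι → Polynomial K → WithTop Λ) (m : ℕ) : Prop :=
  ∃ i : ι, ∀ j : ι, i ≤ j → degOf (ρ j) = m

/-- A continuous family: a totally ordered family of eventually constant degree. -/
def IsContFamily (v : FieldVal K Λ) (ρ : ι → Polynomial K → WithTop Λ) : Prop :=
  IsTOFamily v ρ ∧ ∃ m : ℕ, HasStableDeg ρ m

/-- The stable group `Γ_C`: stable values of nonzero stable polynomials. -/
def stableSet (ρ : ι → Polynomial K → WithTop Λ) : Set Λ :=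
  {δ : Λ | ∃ f : Polynomial K, f ≠ 0 ∧ IsStableVal ρ f (δ : WithTop Λ)}

/-- A limit key polynomial: monic, unstable, of minimal degree among unstable polynomials. -/
def IsLimKeyPol (ρ : ι → Polynomial K → WithTop Λ) (φ : Polynomial K) : Prop :=
  φ.Monic ∧ ¬ IsStablePoly ρ φ ∧
    ∀ f : Polynomial K, ¬ IsStablePoly ρ f → φ.natDegree ≤ f.natDegree

/-- An essential continuous family: `m(C) < m_∞(C) < ∞`. -/
def IsEssential (v : FieldVal K Λ) (ρ : ι → Polynomial K → WithTop Λ) : Prop :=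
  IsTOFamily v ρ ∧
    ∃ m : ℕ, HasStableDeg ρ m ∧
      ∃ φ : Polynomial K, IsLimKeyPol ρ φ ∧ m < φ.natDegree

/-- The limit augmentation `[C; φ, γ]`, acting on `φ`-expansions by
`ν(Σ_s a_s φ^s) = min_s (ρ_C(a_s) + s γ)`. -/
noncomputable def limAugVal (ρ : ι → Polynomial K → WithTop Λ) (φ : Polynomial K)
    (γ : WithTop Λ) (f : Polynomial K) : WithTop Λ :=
  (Finset.range (f.natDegree + 1)).inf'
    (Finset.nonempty_range_iff.mpr (Nat.succ_ne_zero _))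
    fun s => stableVal ρ (expCoeff φ f s) + s • γ

/-- Equivalence of totally ordered families: mutual cofinality. -/
def FamEquiv {κ : Type*} [LinearOrder κ] (ρ : ι → Polynomial K → WithTop Λ)
    (σ : κ → Polynomial K → WithTop Λ) : Prop :=
  (∀ i : ι, ∃ j : κ, ρ i ≤ σ j) ∧ ∀ j : κ, ∃ i : ι, σ j ≤ ρ i

end Families

end MLV

open MLV

namespace S4

variable {K : Type*} [Field K] {Λ : Type*} [AddCommGroup Λ] [LinearOrder Λ] [IsOrderedAddMonoid Λ]
variable {v : FieldVal K Λ} {μ : Polynomial K → WithTop Λ}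

section MuBasic

lemma v_neg_one (v : FieldVal K Λ) : v.v (-1) = 0 := by
  have h := v.map_mul' (-1) (-1)
  rw [neg_mul_neg, one_mul, v.map_one'] at h
  lift v.v (-1) to Λ using v.ne_top' (-1) (by norm_num) with c hc
  have hcc : c + c = 0 := by exact_mod_cast h.symm
  have : c = 0 := by
    rcases lt_trichotomy c 0 with h'|h'|h'
    · exact absurd hcc (by simpa using (add_lt_add h' h').ne)
    · exact h'
    · exact absurd hcc (by simpa using (add_lt_add h' h').ne')
  exact_mod_cast this

lemma mu_neg (hμ : IsValT v μ) (f : Polynomial K) : μ (-f) = μ f := by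
  have : -f = Polynomial.C (-1) * f := by
    rw [map_neg, Polynomial.C_1, neg_one_mul]
  rw [this, hμ.2.2.1, hμ.2.2.2.2, v_neg_one, zero_add]

lemma mu_sub_comm (hμ : IsValT v μ) (f g : Polynomial K) : μ (f - g) = μ (g - f) := by
  rw [← mu_neg hμ (f - g), neg_sub]

lemma mu_add_eq_left (hμ : IsValT v μ) {f g : Polynomial K} (h : μ f < μ g) :
    μ (f + g) = μ f := by
  refine le_antisymm ?_ (le_trans (le_min le_rfl h.le) (hμ.2.2.2.1 f g))
  by_contra hc
  push_neg at hc
  have h3 : μ f = μ ((f + g) + -g) := by rw [show (f + g) + -g = f by ring]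
  have h4 : min (μ (f + g)) (μ (-g)) ≤ μ f := h3 ▸ hμ.2.2.2.1 (f + g) (-g)
  rw [mu_neg hμ] at h4
  exact absurd h4 (not_le.mpr (lt_min hc h))

lemma mu_add_eq_min (hμ : IsValT v μ) {f g : Polynomial K} (h : μ f ≠ μ g) :
    μ (f + g) = min (μ f) (μ g) := by
  rcases lt_or_gt_of_ne h with h' | h'
  · rw [mu_add_eq_left hμ h', min_eq_left h'.le]
  · rw [add_comm, mu_add_eq_left hμ h', min_eq_right h'.le]

lemma v_nat_nonneg (v : FieldVal K Λ) (n : ℕ) : (0 : WithTop Λ) ≤ v.v (n : K) := by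
  induction n with
  | zero => simp [v.map_zero']
  | succ n ih =>
      push_cast
      refine le_trans (le_min ih (le_of_eq v.map_one'.symm)) (v.map_add' _ _)

lemma mu_natCast_nonneg (hμ : IsValT v μ) (n : ℕ) :
    (0 : WithTop Λ) ≤ μ ((n : Polynomial K)) := by
  rw [← Polynomial.C_eq_natCast, hμ.2.2.2.2]
  exact v_nat_nonneg v n

lemma mu_pow (hμ : IsValT v μ) (f : Polynomial K) (n : ℕ) : μ (f ^ n) = n • μ f := by
  induction n with
  | zero => rw [pow_zero, hμ.1, zero_nsmul]
  | succ n ih => rw [pow_succ, hμ.2.2.1, ih, succ_nsmul]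

end MuBasic

end S4

namespace S4

open Polynomial

variable {K : Type*} [Field K] {Λ : Type*} [AddCommGroup Λ] [LinearOrder Λ] [IsOrderedAddMonoid Λ]

section ExpCoeff

variable {φ : Polynomial K}

lemma deg_phi_pos (hm : φ.Monic) (hd : 0 < φ.natDegree) : (0 : WithBot ℕ) < φ.degree := by
  rw [Polynomial.degree_eq_natDegree hm.ne_zero]
  exact_mod_cast hd

lemma deg_one_lt (hm : φ.Monic) (hd : 0 < φ.natDegree) : (1 : Polynomial K).degree < φ.degree :=
  lt_of_le_of_lt (le_of_eq Polynomial.degree_one) (deg_phi_pos hm hd)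

lemma expCoeff_zero_left  (s : ℕ) : expCoeff φ (0 : Polynomial K) s = 0 := by
  simp [expCoeff, Polynomial.zero_divByMonic, Polynomial.zero_modByMonic]

lemma expCoeff_zero  (f : Polynomial K) : expCoeff φ f 0 = f %ₘ φ := by
  simp [expCoeff, Polynomial.divByMonic_one]

lemma expCoeff_zero_of_deg_lt (hm : φ.Monic) {f : Polynomial K} (h : f.degree < φ.degree) :
    expCoeff φ f 0 = f := by
  rw [expCoeff_zero, (Polynomial.modByMonic_eq_self_iff hm).mpr h]

/-- `f /ₘ φ^(s+1) = (f /ₘ φ) /ₘ φ^s`. -/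
lemma divByMonic_pow_succ (hm : φ.Monic) (f : Polynomial K) (s : ℕ) :
    f /ₘ (φ ^ (s + 1)) = (f /ₘ φ) /ₘ (φ ^ s) := by
  refine (Polynomial.div_modByMonic_unique ((f /ₘ φ) /ₘ φ ^ s)
    (((f /ₘ φ) %ₘ φ ^ s) * φ + f %ₘ φ) (hm.pow _) ⟨?_, ?_⟩).1
  · have h1 := Polynomial.modByMonic_add_div f φ
    have h2 := Polynomial.modByMonic_add_div (f /ₘ φ) (φ ^ s)
    calc ((f /ₘ φ) %ₘ φ ^ s) * φ + f %ₘ φ + φ ^ (s + 1) * ((f /ₘ φ) /ₘ φ ^ s)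
        = f %ₘ φ + φ * ((f /ₘ φ) %ₘ φ ^ s + φ ^ s * ((f /ₘ φ) /ₘ φ ^ s)) := by ring
      _ = f := by rw [h2, h1]
  · have hφ0 : φ.degree ≠ ⊥ := by
      rw [Polynomial.degree_eq_bot.ne]; exact hm.ne_zero
    have hps : (φ ^ (s+1)).degree = (φ ^ s).degree + φ.degree := by
      rw [pow_succ, Polynomial.degree_mul]
    refine lt_of_le_of_lt (Polynomial.degree_add_le _ _) (max_lt ?_ ?_)
    · refine lt_of_le_of_lt (Polynomial.degree_mul_le _ _) ?_
      rw [hps]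
      exact WithBot.add_lt_add_right hφ0 (Polynomial.degree_modByMonic_lt _ (hm.pow s))
    · refine lt_of_lt_of_le (Polynomial.degree_modByMonic_lt f hm) ?_
      rw [hps]
      nth_rewrite 1 [← zero_add φ.degree]
      exact add_le_add_left (Polynomial.zero_le_degree_iff.mpr (hm.pow s).ne_zero) _

lemma expCoeff_succ (hm : φ.Monic) (f : Polynomial K) (s : ℕ) :
    expCoeff φ f (s + 1) = expCoeff φ (f /ₘ φ) s := by
  rw [expCoeff, expCoeff, divByMonic_pow_succ hm]

lemma expCoeff_add (hm : φ.Monic) (f g : Polynomial K) (s : ℕ) :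
    expCoeff φ (f + g) s = expCoeff φ f s + expCoeff φ g s := by
  have hdiv : (f + g) /ₘ (φ ^ s) = f /ₘ (φ ^ s) + g /ₘ (φ ^ s) := by
    refine (Polynomial.div_modByMonic_unique (f /ₘ (φ ^ s) + g /ₘ (φ ^ s))
      (f %ₘ (φ ^ s) + g %ₘ (φ ^ s)) (hm.pow _) ⟨?_, ?_⟩).1
    · have h1 := Polynomial.modByMonic_add_div f (φ ^ s)
      have h2 := Polynomial.modByMonic_add_div g (φ ^ s)
      calc f %ₘ φ ^ s + g %ₘ φ ^ s + φ ^ s * (f /ₘ φ ^ s + g /ₘ φ ^ s)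
          = (f %ₘ φ ^ s + φ ^ s * (f /ₘ φ ^ s)) + (g %ₘ φ ^ s + φ ^ s * (g /ₘ φ ^ s)) := by ring
        _ = f + g := by rw [h1, h2]
    · exact lt_of_le_of_lt (Polynomial.degree_add_le _ _)
        (max_lt (Polynomial.degree_modByMonic_lt _ (hm.pow s))
          (Polynomial.degree_modByMonic_lt _ (hm.pow s)))
  rw [expCoeff, expCoeff, expCoeff, hdiv, Polynomial.add_modByMonic]

lemma expCoeff_zero_of_lt_pow (hm : φ.Monic) {f : Polynomial K} {s : ℕ} (h : f.degree < (φ ^ s).degree) :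
    expCoeff φ f s = 0 := by
  rw [expCoeff, (Polynomial.divByMonic_eq_zero_iff (hm.pow s)).mpr h,
    Polynomial.zero_modByMonic]

lemma expCoeff_zero_of_natDegree_lt (hm : φ.Monic) (hd : 0 < φ.natDegree) {f : Polynomial K} {s : ℕ} (h : f.natDegree < s) :
    expCoeff φ f s = 0 := by
  refine expCoeff_zero_of_lt_pow hm ?_
  rcases eq_or_ne f 0 with rfl | hf
  · rw [Polynomial.degree_zero]
    exact bot_lt_iff_ne_bot.mpr (by rw [Polynomial.degree_eq_bot.ne]; exact (hm.pow s).ne_zero)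
  · refine Polynomial.degree_lt_degree ?_
    rw [hm.natDegree_pow]
    calc f.natDegree < s := h
      _ ≤ s * φ.natDegree := Nat.le_mul_of_pos_right s hd

/-- coefficients of `c * φ ^ k`, low part. -/
lemma expCoeff_mul_pow_lt (hm : φ.Monic) (c : Polynomial K) {k s : ℕ} (h : s < k) :
    expCoeff φ (c * φ ^ k) s = 0 := by
  have hdiv : (c * φ ^ k) /ₘ (φ ^ s) = c * φ ^ (k - s) := by
    refine (Polynomial.div_modByMonic_unique _ 0 (hm.pow _) ⟨?_, ?_⟩).1
    · rw [zero_add, ← mul_assoc, mul_comm (φ ^ s), mul_assoc, ← pow_add]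
      congr 2
      omega
    · rw [Polynomial.degree_zero]
      exact bot_lt_iff_ne_bot.mpr (by rw [Polynomial.degree_eq_bot.ne]; exact (hm.pow s).ne_zero)
  rw [expCoeff, hdiv, Polynomial.modByMonic_eq_zero_iff_dvd hm]
  exact Dvd.dvd.mul_left (dvd_pow_self φ (by omega)) c

/-- coefficients of `c * φ ^ k`, high part. -/
lemma expCoeff_mul_pow (hm : φ.Monic) (c : Polynomial K) (k s : ℕ) :
    expCoeff φ (c * φ ^ k) (k + s) = expCoeff φ c s := by
  have hdiv : (c * φ ^ k) /ₘ (φ ^ (k + s)) = c /ₘ (φ ^ s) := by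
    refine (Polynomial.div_modByMonic_unique _ ((c %ₘ (φ ^ s)) * φ ^ k) (hm.pow _) ⟨?_, ?_⟩).1
    · have h1 := Polynomial.modByMonic_add_div c (φ ^ s)
      calc (c %ₘ φ ^ s) * φ ^ k + φ ^ (k + s) * (c /ₘ φ ^ s)
          = (c %ₘ φ ^ s + φ ^ s * (c /ₘ φ ^ s)) * φ ^ k := by rw [pow_add]; ring
        _ = c * φ ^ k := by rw [h1]
    · have hps : (φ ^ (k + s)).degree = (φ ^ s).degree + (φ ^ k).degree := by
        rw [← Polynomial.degree_mul, ← pow_add, add_comm k s]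
      refine lt_of_le_of_lt (Polynomial.degree_mul_le _ _) ?_
      rw [hps]
      exact WithBot.add_lt_add_right
        (by rw [Polynomial.degree_eq_bot.ne]; exact (hm.pow k).ne_zero)
        (Polynomial.degree_modByMonic_lt _ (hm.pow s))
  rw [expCoeff, hdiv, expCoeff]

/-- reconstruction of `f` from its `φ`-expansion. -/
lemma expansion_eq (hm : φ.Monic) (hd : 0 < φ.natDegree) (N : ℕ) : ∀ f : Polynomial K, f.natDegree ≤ N →
    ∑ s ∈ Finset.range (N + 1), expCoeff φ f s * φ ^ s = f := by
  induction N with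
  | zero =>
      intro f hf
      rw [Finset.sum_range_one, pow_zero, mul_one]
      refine expCoeff_zero_of_deg_lt hm ?_
      rcases eq_or_ne f 0 with rfl | hf0
      · rw [Polynomial.degree_zero]
        exact bot_lt_iff_ne_bot.mpr (by rw [Polynomial.degree_eq_bot.ne]; exact hm.ne_zero)
      · exact Polynomial.degree_lt_degree (by omega)
  | succ N ih =>
      intro f hf
      rw [Finset.sum_range_succ']
      have hdq : (f /ₘ φ).natDegree ≤ N := by
        rw [Polynomial.natDegree_divByMonic f hm]
        omega
      calc (∑ i ∈ Finset.range (N + 1), expCoeff φ f (i + 1) * φ ^ (i + 1))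
            + expCoeff φ f 0 * φ ^ 0
          = (∑ i ∈ Finset.range (N + 1), expCoeff φ (f /ₘ φ) i * φ ^ i) * φ + f %ₘ φ := by
            rw [Finset.sum_mul, pow_zero, mul_one, expCoeff_zero]
            congr 1
            refine Finset.sum_congr rfl fun i _ => ?_
            rw [expCoeff_succ hm, pow_succ, mul_assoc]
        _ = f := by rw [ih _ hdq, mul_comm, add_comm]; exact Polynomial.modByMonic_add_div f φ

end ExpCoeff

end S4

namespace S4

open Polynomial

variable {K : Type*} [Field K] {Λ : Type*} [AddCommGroup Λ] [LinearOrder Λ] [IsOrderedAddMonoid Λ]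
variable {v : FieldVal K Λ} {μ : Polynomial K → WithTop Λ} {φ : Polynomial K} {γ : WithTop Λ}

lemma deg_zero_lt (hm : φ.Monic) : (0 : Polynomial K).degree < φ.degree := by
  rw [Polynomial.degree_zero]
  exact bot_lt_iff_ne_bot.mpr (by rw [Polynomial.degree_eq_bot.ne]; exact hm.ne_zero)

lemma deg_le_pow (hm : φ.Monic) {s : ℕ} (hs : 1 ≤ s) : φ.degree ≤ (φ ^ s).degree := by
  rw [Polynomial.degree_eq_natDegree hm.ne_zero,
    Polynomial.degree_eq_natDegree (hm.pow s).ne_zero, hm.natDegree_pow]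
  exact_mod_cast Nat.le_mul_of_pos_left _ hs

lemma expCoeff_zero_of_deg_lt_pos (hm : φ.Monic) {f : Polynomial K} {s : ℕ}
    (ha : f.degree < φ.degree) (hs : 1 ≤ s) : expCoeff φ f s = 0 :=
  expCoeff_zero_of_lt_pow hm (ha.trans_le (deg_le_pow hm hs))

lemma augVal_le_term (hμ : IsValT v μ) (hm : φ.Monic) (hd : 0 < φ.natDegree)
    (f : Polynomial K) (s : ℕ) :
    augVal μ φ γ f ≤ μ (expCoeff φ f s) + s • γ := by
  by_cases hs : s ≤ f.natDegree
  · exact Finset.inf'_le _ (Finset.mem_range.mpr (by omega))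
  · rw [expCoeff_zero_of_natDegree_lt hm hd (by omega), hμ.2.1, top_add]
    exact le_top

lemma le_augVal {b : WithTop Λ} {f : Polynomial K}
    (h : ∀ s : ℕ, b ≤ μ (expCoeff φ f s) + s • γ) : b ≤ augVal μ φ γ f :=
  Finset.le_inf' _ _ fun s _ => h s

lemma augVal_of_deg_lt (hμ : IsValT v μ) (hm : φ.Monic) (hd : 0 < φ.natDegree)
    {f : Polynomial K} (h : f.degree < φ.degree) : augVal μ φ γ f = μ f := by
  refine le_antisymm ?_ (le_augVal fun s => ?_)
  · have h0 := augVal_le_term hμ hm hd (γ := γ) f 0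
    rwa [expCoeff_zero_of_deg_lt hm h, zero_nsmul, add_zero] at h0
  · match s with
    | 0 => rw [expCoeff_zero_of_deg_lt hm h, zero_nsmul, add_zero]
    | s + 1 =>
        rw [expCoeff_succ hm, (Polynomial.divByMonic_eq_zero_iff hm).mpr h,
          expCoeff_zero_left, hμ.2.1, top_add]
        exact le_top

lemma augVal_phi_add (hμ : IsValT v μ) (hm : φ.Monic) (hd : 0 < φ.natDegree)
    {a : Polynomial K} (ha : a.degree < φ.degree) :
    augVal μ φ γ (φ + a) = min (μ a) γ := by
  have hrw : φ + a = 1 * φ ^ 1 + a := by ring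
  have hc0 : expCoeff φ (φ + a) 0 = a := by
    rw [hrw, expCoeff_add hm, expCoeff_mul_pow_lt hm _ Nat.zero_lt_one,
      expCoeff_zero_of_deg_lt hm ha, zero_add]
  have hc1 : expCoeff φ (φ + a) 1 = 1 := by
    rw [hrw, expCoeff_add hm, show (1 : ℕ) = 1 + 0 from rfl, expCoeff_mul_pow hm,
      expCoeff_zero_of_deg_lt hm (deg_one_lt hm hd),
      expCoeff_zero_of_lt_pow hm (by rwa [pow_one]), add_zero]
  have hcs : ∀ t : ℕ, expCoeff φ (φ + a) (t + 2) = 0 := by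
    intro t
    rw [hrw, expCoeff_add hm, show t + 2 = 1 + (t + 1) by omega, expCoeff_mul_pow hm,
      expCoeff_zero_of_natDegree_lt hm hd (by simp),
      expCoeff_zero_of_deg_lt_pos hm ha (by omega), add_zero]
  refine le_antisymm (le_min ?_ ?_) (le_augVal fun s => ?_)
  · have h0 := augVal_le_term hμ hm hd (γ := γ) (φ + a) 0
    rwa [hc0, zero_nsmul, add_zero] at h0
  · have h1 := augVal_le_term hμ hm hd (γ := γ) (φ + a) 1
    rwa [hc1, hμ.1, one_nsmul, zero_add] at h1
  · match s with
    | 0 => rw [hc0, zero_nsmul, add_zero]; exact min_le_left _ _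
    | 1 => rw [hc1, hμ.1, one_nsmul, zero_add]; exact min_le_right _ _
    | t + 2 => rw [hcs t, hμ.2.1, top_add]; exact le_top

lemma augVal_phi (hμ : IsValT v μ) (hm : φ.Monic) (hd : 0 < φ.natDegree) :
    augVal μ φ γ φ = γ := by
  have := augVal_phi_add (γ := γ) hμ hm hd (deg_zero_lt hm)
  rwa [add_zero, hμ.2.1, min_eq_right le_top] at this

lemma augVal_add (hμ : IsValT v μ) (hm : φ.Monic) (hd : 0 < φ.natDegree)
    (f g : Polynomial K) :
    min (augVal μ φ γ f) (augVal μ φ γ g) ≤ augVal μ φ γ (f + g) := by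
  refine le_augVal fun s => ?_
  rw [expCoeff_add hm]
  calc min (augVal μ φ γ f) (augVal μ φ γ g)
      ≤ min (μ (expCoeff φ f s) + s • γ) (μ (expCoeff φ g s) + s • γ) :=
        min_le_min (augVal_le_term hμ hm hd f s) (augVal_le_term hμ hm hd g s)
    _ = min (μ (expCoeff φ f s)) (μ (expCoeff φ g s)) + s • γ :=
        min_add_add_right _ _ _
    _ ≤ μ (expCoeff φ f s + expCoeff φ g s) + s • γ :=
        add_le_add_left (hμ.2.2.2.1 _ _) _

lemma le_augVal_sum (hμ : IsValT v μ) (hm : φ.Monic) (hd : 0 < φ.natDegree)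
    {ι : Type*} (S : Finset ι) (g : ι → Polynomial K) {b : WithTop Λ}
    (h : ∀ i ∈ S, b ≤ augVal μ φ γ (g i)) :
    b ≤ augVal μ φ γ (∑ i ∈ S, g i) := by
  induction S using Finset.cons_induction with
  | empty =>
      refine le_trans ?_ (le_augVal (b := (⊤ : WithTop Λ)) fun s => ?_)
      · exact le_top
      · rw [Finset.sum_empty, expCoeff_zero_left, hμ.2.1, top_add]
  | cons i S hi ih =>
      rw [Finset.sum_cons]
      refine le_trans (le_min (h i (Finset.mem_cons_self i S)) ?_)
        (augVal_add hμ hm hd _ _)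
      exact ih fun j hj => h j (Finset.mem_cons_of_mem hj)

lemma augVal_mul_pow (hμ : IsValT v μ) (hm : φ.Monic) (hd : 0 < φ.natDegree)
    (c : Polynomial K) (k : ℕ) :
    augVal μ φ γ c + k • γ ≤ augVal μ φ γ (c * φ ^ k) := by
  refine le_augVal fun s => ?_
  rcases lt_or_ge s k with hs | hs
  · rw [expCoeff_mul_pow_lt hm _ hs, hμ.2.1, top_add]
    exact le_top
  · obtain ⟨t, rfl⟩ := Nat.exists_eq_add_of_le hs
    rw [expCoeff_mul_pow hm, add_nsmul, add_comm (k • γ) (t • γ), ← add_assoc]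
    exact add_le_add_left (augVal_le_term hμ hm hd c t) _

lemma mu_qr (hμ : IsValT v μ) (hmin : IsMuMinimal μ φ)
    (q r : Polynomial K) (hr : r.degree < φ.degree) :
    μ (q * φ + r) = min (μ (q * φ)) (μ r) := by
  by_cases h : μ (q * φ) = μ r
  · refine le_antisymm ?_ (hμ.2.2.2.1 _ _)
    rw [h, min_self]
    by_contra hc
    push_neg at hc
    have hrt : μ r ≠ ⊤ := fun ht => not_top_lt (ht ▸ hc)
    have hr0 : r ≠ 0 := fun h0 => hrt (h0 ▸ hμ.2.1)
    refine hmin.2 r hr0 hr ⟨-q, ?_⟩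
    show μ r < μ (r - -q * φ)
    rw [show r - -q * φ = q * φ + r by ring]
    exact hc
  · exact mu_add_eq_min hμ h

lemma mu_le_coeff (hμ : IsValT v μ) (hm : φ.Monic) (hmin : IsMuMinimal μ φ) :
    ∀ (s : ℕ) (f : Polynomial K), μ f ≤ μ (expCoeff φ f s) + s • (μ φ) := by
  have key : ∀ f : Polynomial K, μ f = min (μ ((f /ₘ φ) * φ)) (μ (f %ₘ φ)) := by
    intro f
    conv_lhs => rw [← Polynomial.modByMonic_add_div f φ]
    rw [show f %ₘ φ + φ * (f /ₘ φ) = (f /ₘ φ) * φ + f %ₘ φ by ring]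
    exact mu_qr hμ hmin _ _ (Polynomial.degree_modByMonic_lt f hm)
  intro s
  induction s with
  | zero =>
      intro f
      rw [expCoeff_zero, zero_nsmul, add_zero, key f]
      exact min_le_right _ _
  | succ s ih =>
      intro f
      rw [expCoeff_succ hm, succ_nsmul, ← add_assoc]
      calc μ f ≤ μ ((f /ₘ φ) * φ) := (key f) ▸ min_le_left _ _
        _ = μ (f /ₘ φ) + μ φ := by rw [hμ.2.2.1]
        _ ≤ (μ (expCoeff φ (f /ₘ φ) s) + s • μ φ) + μ φ := add_le_add_left (ih _) _

lemma mu_le_augVal (hμ : IsValT v μ) (hm : φ.Monic) (hd : 0 < φ.natDegree)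
    (hmin : IsMuMinimal μ φ) (hγ : μ φ ≤ γ) (f : Polynomial K) :
    μ f ≤ augVal μ φ γ f := by
  refine le_augVal fun s => ?_
  calc μ f ≤ μ (expCoeff φ f s) + s • (μ φ) := mu_le_coeff hμ hm hmin s f
    _ ≤ μ (expCoeff φ f s) + s • γ := add_le_add_right (nsmul_le_nsmul_right hγ s) _

end S4

namespace S4

open Polynomial

variable {K : Type*} [Field K] {Λ : Type*} [AddCommGroup Λ] [LinearOrder Λ] [IsOrderedAddMonoid Λ]
variable {v : FieldVal K Λ} {μ : Polynomial K → WithTop Λ} {γ : WithTop Λ}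

/-- Main comparison: if `γ ≤ μ(φ' - φ)`, then `[μ; φ', γ] ≤ [μ; φ, γ]` pointwise. -/
lemma aug_le_aug (hμ : IsValT v μ) {φ φ' : Polynomial K} (hφ : IsKeyPol μ φ)
    (hγ : μ φ < γ) (hm' : φ'.Monic) (hd' : 0 < φ'.natDegree)
    (h : γ ≤ μ (φ' - φ)) (f : Polynomial K) :
    augVal μ φ' γ f ≤ augVal μ φ γ f := by
  obtain ⟨hm, hmin, hirr⟩ := hφ
  have hd : 0 < φ.natDegree := hmin.1
  -- Step B': ν(b * φ'^s) ≥ μ(b) + s γ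
  have hB : ∀ (s : ℕ) (b : Polynomial K), μ b + s • γ ≤ augVal μ φ γ (b * φ' ^ s) := by
    intro s b
    rw [show φ' = φ + (φ' - φ) by ring, add_pow, Finset.mul_sum]
    refine le_augVal_sum hμ hm hd _ _ fun k hk => ?_
    rw [Finset.mem_range] at hk
    have hk' : k ≤ s := by omega
    rw [show b * (φ ^ k * (φ' - φ) ^ (s - k) * (s.choose k : Polynomial K))
        = (b * (φ' - φ) ^ (s - k) * (s.choose k : Polynomial K)) * φ ^ k by ring]
    set c := b * (φ' - φ) ^ (s - k) * (s.choose k : Polynomial K) with hc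
    have hμc : μ b + (s - k) • γ ≤ μ c := by
      rw [hc, hμ.2.2.1, hμ.2.2.1]
      calc μ b + (s - k) • γ = (μ b + (s - k) • γ) + 0 := (add_zero _).symm
        _ ≤ (μ b + μ ((φ' - φ) ^ (s - k))) + μ ((s.choose k : Polynomial K)) := by
            refine add_le_add ?_ (mu_natCast_nonneg hμ _)
            refine add_le_add_right ?_ _
            rw [mu_pow hμ]
            exact nsmul_le_nsmul_right h _
    calc μ b + s • γ = (μ b + (s - k) • γ) + k • γ := by
          rw [add_assoc, ← add_nsmul]
          congr 2
          omega
      _ ≤ μ c + k • γ := add_le_add_left hμc _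
      _ ≤ augVal μ φ γ c + k • γ :=
          add_le_add_left (mu_le_augVal hμ hm hd hmin hγ.le c) _
      _ ≤ augVal μ φ γ (c * φ ^ k) := augVal_mul_pow hμ hm hd c k
  -- expand f in powers of φ'
  conv_rhs => rw [← expansion_eq hm' hd' f.natDegree f le_rfl]
  refine le_augVal_sum hμ hm hd _ _ fun s hs => ?_
  refine le_trans ?_ (hB s (expCoeff φ' f s))
  exact Finset.inf'_le _ hs

end S4

/-- `[μ; φ, γ] = [μ; φ*, γ*]` if and only if `γ = γ*` and `μ(φ* - φ) ≥ γ`;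
in this case `φ ∼_μ φ*`. -/
theorem statement_4 {K : Type*} [Field K] {Λ : Type*} [AddCommGroup Λ] [LinearOrder Λ] [IsOrderedAddMonoid Λ]
    (v : FieldVal K Λ) (μ : Polynomial K → WithTop Λ) (hμ : IsValT v μ)
    (hin : IsInnerNode μ) (φ φ' : Polynomial K) (hφ : IsKeyPol μ φ) (hφ' : IsKeyPol μ φ')
    (γ γ' : WithTop Λ) (hγ : μ φ < γ) (hγ' : μ φ' < γ') :
    (augVal μ φ γ = augVal μ φ' γ' ↔ γ = γ' ∧ γ ≤ μ (φ' - φ)) ∧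
    (augVal μ φ γ = augVal μ φ' γ' → MuEquiv μ φ φ') := by
  have hm : φ.Monic := hφ.1
  have hd : 0 < φ.natDegree := hφ.2.1.1
  have hm' : φ'.Monic := hφ'.1
  have hd' : 0 < φ'.natDegree := hφ'.2.1.1
  have hiff : augVal μ φ γ = augVal μ φ' γ' ↔ γ = γ' ∧ γ ≤ μ (φ' - φ) := by
    constructor
    · intro h
      -- the degrees must coincide
      have hdeg : φ.natDegree = φ'.natDegree := by
        by_contra hne
        rcases lt_or_gt_of_ne hne with hlt | hlt
        · have h1 : augVal μ φ γ φ = γ := S4.augVal_phi hμ hm hd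
          have h2 : augVal μ φ' γ' φ = μ φ :=
            S4.augVal_of_deg_lt hμ hm' hd' (Polynomial.degree_lt_degree hlt)
          rw [h, h2] at h1
          exact absurd h1 hγ.ne
        · have h1 : augVal μ φ' γ' φ' = γ' := S4.augVal_phi hμ hm' hd'
          have h2 : augVal μ φ γ φ' = μ φ' :=
            S4.augVal_of_deg_lt hμ hm hd (Polynomial.degree_lt_degree hlt)
          rw [← h, h2] at h1
          exact absurd h1 hγ'.ne
      have hdegree : φ'.degree = φ.degree := by
        rw [Polynomial.degree_eq_natDegree hm.ne_zero,
          Polynomial.degree_eq_natDegree hm'.ne_zero, hdeg]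
      have ha : (φ' - φ).degree < φ.degree := by
        rcases eq_or_ne φ' φ with rfl | hne
        · rw [sub_self]
          exact S4.deg_zero_lt hm
        · exact hdegree ▸ Polynomial.degree_sub_lt hdegree hm'.ne_zero
            (by rw [hm.leadingCoeff, hm'.leadingCoeff])
      have ha' : (φ - φ').degree < φ'.degree := by
        rw [show φ - φ' = -(φ' - φ) by ring, Polynomial.degree_neg, hdegree]
        exact ha
      have e1 : min (μ (φ' - φ)) γ = γ' := by
        have l := S4.augVal_phi_add (γ := γ) hμ hm hd ha
        rw [show φ + (φ' - φ) = φ' by ring, h, S4.augVal_phi hμ hm' hd'] at l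
        exact l.symm
      have e2 : min (μ (φ - φ')) γ' = γ := by
        have l := S4.augVal_phi_add (γ := γ') hμ hm' hd' ha'
        rw [show φ' + (φ - φ') = φ by ring, ← h, S4.augVal_phi hμ hm hd] at l
        exact l.symm
      have hγγ' : γ = γ' := le_antisymm (e2 ▸ min_le_right _ _) (e1 ▸ min_le_right _ _)
      refine ⟨hγγ', ?_⟩
      rw [← hγγ'] at e1
      exact min_eq_right_iff.mp e1
    · rintro ⟨hγγ', hle⟩
      subst hγγ'
      funext f
      refine le_antisymm ?_ ?_
      · exact S4.aug_le_aug hμ hφ' hγ' hm hd (by rw [S4.mu_sub_comm hμ]; exact hle) f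
      · exact S4.aug_le_aug hμ hφ hγ hm' hd' hle f
  refine ⟨hiff, fun h => ?_⟩
  obtain ⟨hγγ', hle⟩ := hiff.mp h
  show μ φ < μ (φ - φ')
  rw [S4.mu_sub_comm hμ]
  exact lt_of_lt_of_le hγ hle
end

section
/- Let μ be an inner node of T. On the set {ν ∈ T : μ < ν}, the relation ν ∼_tan ν' defined by (μ,ν] ∩ (μ,ν'] ≠ ∅ (where (μ,ν] = {ρ ∈ T : μ < ρ ≤ ν}) is an equivalence relation; let TD(μ) be the quotient set. For φ ∈ KP(μ), the class t_μ(φ) of the augmented valuation [μ; φ, γ] in TD(μ) is independent of the choice of γ ∈ Λ∪{∞} with γ > μ(φ). The resulting map t_μ : KP(μ) → TD(μ) is surjective, and t_μ(φ) = t_μ(φ*) holds if and only if φ ∼_μ φ*; hence t_μ induces a bijection between KP(μ)/∼_μ and TD(μ). -/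
open Polynomial

open MLV

/-- `ν ∼_tan ν'` : the intervals `(μ,ν]` and `(μ,ν']` in `T` meet. -/
def TanRel {K : Type*} [Field K] {Λ : Type*} [AddCommGroup Λ] [LinearOrder Λ] [IsOrderedAddMonoid Λ]
    (v : FieldVal K Λ) (μ ν ν' : Polynomial K → WithTop Λ) : Prop :=
  ∃ ρ : Polynomial K → WithTop Λ, IsValT v ρ ∧ μ < ρ ∧ ρ ≤ ν ∧ ρ ≤ ν'

/-! ### Auxiliary development for `statement_5` -/

namespace MLVAux

open MLV Polynomial Finset

variable {K : Type*} [Field K] {Λ : Type*} [AddCommGroup Λ] [LinearOrder Λ] [IsOrderedAddMonoid Λ]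

/-! #### `WithTop` helpers -/

lemma wt_add_self (a : WithTop Λ) (h : a + a = 0) : a = 0 := by
  cases a with
  | top => simp at h
  | coe a =>
    have h' : a + a = 0 := by exact_mod_cast h
    have ha : a = 0 := by
      rcases lt_trichotomy a 0 with hlt | he | hgt
      · have := add_lt_add hlt hlt
        rw [h', add_zero] at this; exact absurd this (lt_irrefl _)
      · exact he
      · have := add_lt_add hgt hgt
        rw [h', add_zero] at this; exact absurd this (lt_irrefl _)
    rw [ha]; rfl

lemma nsmul_top_of_ne {s : ℕ} (h : s ≠ 0) : s • (⊤ : WithTop Λ) = ⊤ := by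
  cases s with
  | zero => exact absurd rfl h
  | succ n => rw [succ_nsmul, add_top]

lemma min_add_right (a b c : WithTop Λ) : min a b + c = min (a + c) (b + c) := by
  rcases le_total a b with h | h
  · rw [min_eq_left h, min_eq_left (add_le_add_left h c)]
  · rw [min_eq_right h, min_eq_right (add_le_add_left h c)]

lemma lt_add_of_lt_of_le {a b c d : WithTop Λ} (hab : a + b ≠ ⊤) (h1 : a < c) (h2 : b ≤ d) :
    a + b < c + d := by
  have hb : b ≠ ⊤ := fun hb => hab (by rw [hb, add_top])
  calc a + b < c + b := (WithTop.add_lt_add_iff_right hb).mpr h1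
    _ ≤ c + d := add_le_add_right h2 c

lemma lt_add_of_le_of_lt {a b c d : WithTop Λ} (hab : a + b ≠ ⊤) (h1 : a ≤ c) (h2 : b < d) :
    a + b < c + d := by
  rw [add_comm a b, add_comm c d]
  exact lt_add_of_lt_of_le (by rwa [add_comm b a]) h2 h1

lemma wt_lt_of_add_lt_add_right {a b c : WithTop Λ} (h : a + c < b + c) : a < b := by
  by_contra hle
  exact absurd (add_le_add_left (not_lt.mp hle) c) (not_le.mpr h)

lemma wt_le_of_add_le_add_right {a b c : WithTop Λ} (hc : c ≠ ⊤) (h : a + c ≤ b + c) :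
    a ≤ b := by
  by_contra hlt
  exact absurd h (not_le.mpr ((WithTop.add_lt_add_iff_right hc).mpr (not_le.mp hlt)))

lemma inf'_add_right (s : Finset ℕ) (hs : s.Nonempty) (f : ℕ → WithTop Λ) (c : WithTop Λ) :
    s.inf' hs f + c = s.inf' hs (fun i => f i + c) := by
  apply le_antisymm
  · exact le_inf' hs _ fun i hi => add_le_add_left (inf'_le f hi) c
  · obtain ⟨i, hi, hieq⟩ := exists_mem_eq_inf' hs f
    rw [hieq]
    exact inf'_le _ hi

lemma inf'_mono_fun' {s : Finset ℕ} (hs : s.Nonempty) {f g : ℕ → WithTop Λ}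
    (h : ∀ i ∈ s, f i ≤ g i) : s.inf' hs f ≤ s.inf' hs g :=
  le_inf' hs g fun i hi => le_trans (inf'_le f hi) (h i hi)

lemma inf'_range_eq {m n : ℕ} (h : m = n) (H : (range m).Nonempty)
    (H' : (range n).Nonempty) (f : ℕ → WithTop Λ) :
    (range m).inf' H f = (range n).inf' H' f := by subst h; rfl

lemma inf'_range_split (n : ℕ) (hn : 0 < n) (f : ℕ → WithTop Λ) :
    (range (n + 1)).inf' nonempty_range_add_one f =
      min (f 0) ((range n).inf' (nonempty_range_iff.mpr hn.ne') (fun s => f (s + 1))) := by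
  apply le_antisymm
  · refine le_min (inf'_le f (mem_range.mpr (Nat.succ_pos n))) ?_
    refine le_inf' _ _ fun i hi => inf'_le f ?_
    rw [mem_range] at hi ⊢; omega
  · refine le_inf' _ _ fun i hi => ?_
    cases i with
    | zero => exact min_le_left _ _
    | succ t =>
      refine le_trans (min_le_right _ _) (inf'_le _ ?_)
      rw [mem_range] at hi ⊢; omega

/-! #### Basic facts about valuations in `T` -/

variable {v : FieldVal K Λ} {μ ν ρ : Polynomial K → WithTop Λ}

section MuFacts

variable (hμ : IsValT v μ)
include hμ

lemma mu_one : μ 1 = 0 := hμ.1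
lemma mu_zero : μ 0 = ⊤ := hμ.2.1
lemma mu_mul (f g : Polynomial K) : μ (f * g) = μ f + μ g := hμ.2.2.1 f g
lemma mu_min_le (f g : Polynomial K) : min (μ f) (μ g) ≤ μ (f + g) := hμ.2.2.2.1 f g
lemma mu_C (a : K) : μ (C a) = v.v a := hμ.2.2.2.2 a

lemma mu_pow (f : Polynomial K) (s : ℕ) : μ (f ^ s) = s • μ f := by
  induction s with
  | zero => rw [pow_zero, zero_smul]; exact hμ.1
  | succ n ih => rw [pow_succ, hμ.2.2.1, ih, succ_nsmul]

lemma mu_neg (f : Polynomial K) : μ (-f) = μ f := by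
  have h1 : μ (-1 : Polynomial K) = 0 := by
    apply wt_add_self
    rw [← hμ.2.2.1, neg_one_mul, neg_neg, hμ.1]
  rw [← neg_one_mul, hμ.2.2.1, h1, zero_add]

lemma mu_sub_comm (f g : Polynomial K) : μ (f - g) = μ (g - f) := by
  rw [← mu_neg hμ (g - f), neg_sub]

/-- exact min when one term is strictly smaller -/
lemma mu_add_eq_left {f g : Polynomial K} (h : μ f < μ g) : μ (f + g) = μ f := by
  apply le_antisymm
  · have := mu_min_le hμ (f + g) (-g)
    rw [add_neg_cancel_right, mu_neg hμ] at this
    rcases min_le_iff.mp this with h1 | h1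
    · exact h1
    · exact absurd h1 (not_le.mpr h)
  · exact le_trans (le_min le_rfl h.le) (mu_min_le hμ f g)

lemma mu_add_eq_min {f g : Polynomial K} (h : μ f ≠ μ g) : μ (f + g) = min (μ f) (μ g) := by
  rcases lt_or_gt_of_ne h with hlt | hgt
  · rw [mu_add_eq_left hμ hlt, min_eq_left hlt.le]
  · rw [add_comm, mu_add_eq_left hμ hgt, min_eq_right hgt.le]

lemma mu_sum_le {α : Type*} (s : Finset α) (F : α → Polynomial K) (b : WithTop Λ)
    (h : ∀ i ∈ s, b ≤ μ (F i)) : b ≤ μ (∑ i ∈ s, F i) := by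
  classical
  induction s using Finset.induction_on with
  | empty => rw [Finset.sum_empty, mu_zero hμ]; exact le_top
  | @insert a s' hx ih =>
    rw [Finset.sum_insert hx]
    refine le_trans (le_min (h a (mem_insert_self a s')) ?_) (mu_min_le hμ _ _)
    exact ih fun i hi => h i (mem_insert_of_mem hi)

/-- value of a sum whose `μ`-minimum is attained at a unique strictly minimal term -/
lemma mu_sum_eq {α : Type*} [DecidableEq α] (s : Finset α) (F : α → Polynomial K) {p0 : α}
    (hp0 : p0 ∈ s) (h : ∀ p ∈ s, p ≠ p0 → μ (F p0) < μ (F p)) :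
    μ (∑ i ∈ s, F i) = μ (F p0) := by
  rcases eq_or_ne (μ (F p0)) ⊤ with htop | hne
  · have hle : ∀ i ∈ s, μ (F p0) ≤ μ (F i) := by
      intro i hi
      rcases eq_or_ne i p0 with rfl | hi2
      · exact le_rfl
      · exact (h i hi hi2).le
    exact le_antisymm (htop ▸ le_top) (mu_sum_le hμ s F _ hle)
  rw [← Finset.add_sum_erase s F hp0]
  · apply mu_add_eq_left hμ
    rcases (s.erase p0).eq_empty_or_nonempty with he | hne2
    · rw [he, Finset.sum_empty, mu_zero hμ]
      exact lt_top_iff_ne_top.mpr hne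
    · have : (s.erase p0).inf' hne2 (fun i => μ (F i)) ≤ μ (∑ i ∈ s.erase p0, F i) := by
        apply mu_sum_le hμ
        intro i hi; exact inf'_le _ hi
      obtain ⟨q, hq, hqe⟩ := exists_mem_eq_inf' hne2 (fun i => μ (F i))
      calc μ (F p0) < μ (F q) := h q (Finset.mem_of_mem_erase hq) (Finset.ne_of_mem_erase hq)
        _ = _ := hqe.symm
        _ ≤ _ := this

lemma mu_C_ne_top {a : K} (ha : a ≠ 0) : μ (C a) ≠ ⊤ := by
  rw [mu_C hμ]; exact v.ne_top' a ha

/-- monicization preserves strict increase of valuations -/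
lemma monicize (hρ : IsValT v ρ) {f : Polynomial K} (hf : f ≠ 0) (h : μ f < ρ f) :
    ∃ g : Polynomial K, g.Monic ∧ g.natDegree = f.natDegree ∧ μ g < ρ g := by
  refine ⟨f * C (f.leadingCoeff)⁻¹, monic_mul_leadingCoeff_inv hf,
    natDegree_mul_C (inv_ne_zero (leadingCoeff_ne_zero.mpr hf)), ?_⟩
  rw [mu_mul hμ, mu_mul hρ, mu_C hμ, mu_C hρ]
  exact (WithTop.add_lt_add_iff_right
    (v.ne_top' _ (inv_ne_zero (leadingCoeff_ne_zero.mpr hf)))).mpr h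

/-- conversely, values of a polynomial and its monicization agree up to the same constant -/
lemma mu_eq_of_monic_eq (hν : IsValT v ν) {f : Polynomial K} (hf : f ≠ 0)
    (h : μ (f * C (f.leadingCoeff)⁻¹) = ν (f * C (f.leadingCoeff)⁻¹)) : μ f = ν f := by
  have hc : (f.leadingCoeff)⁻¹ ≠ 0 := inv_ne_zero (leadingCoeff_ne_zero.mpr hf)
  have : f = f * C (f.leadingCoeff)⁻¹ * C (f.leadingCoeff) := by
    rw [mul_assoc, ← C_mul, inv_mul_cancel₀ (leadingCoeff_ne_zero.mpr hf), C_1, mul_one]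
  rw [this, mu_mul hμ, mu_mul hν, h, mu_C hμ, mu_C hν]

lemma mu_sum_bound {α : Type*} (A : Finset α) (F : α → Polynomial K) (c b : WithTop Λ)
    (h : ∀ p ∈ A, b ≤ μ (F p) + c) : b ≤ μ (∑ p ∈ A, F p) + c := by
  rcases A.eq_empty_or_nonempty with rfl | hA
  · rw [Finset.sum_empty, mu_zero hμ, top_add]
    exact le_top
  · obtain ⟨q, hq, hqe⟩ := exists_mem_eq_inf' hA (fun p => μ (F p))
    have h1 : A.inf' hA (fun p => μ (F p)) ≤ μ (∑ p ∈ A, F p) :=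
      mu_sum_le hμ A F _ fun p hp => inf'_le _ hp
    calc b ≤ μ (F q) + c := h q hq
      _ = A.inf' hA (fun p => μ (F p)) + c := by rw [← hqe]
      _ ≤ _ := add_le_add_left h1 c

lemma mu_sum_gt {α : Type*} (A : Finset α) (F : α → Polynomial K) {b : WithTop Λ}
    (hb : b ≠ ⊤) (h : ∀ p ∈ A, b < μ (F p)) : b < μ (∑ p ∈ A, F p) := by
  rcases A.eq_empty_or_nonempty with rfl | hA
  · rw [Finset.sum_empty, mu_zero hμ]
    exact lt_top_iff_ne_top.mpr hb
  · obtain ⟨q, hq, hqe⟩ := exists_mem_eq_inf' hA (fun p => μ (F p))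
    have h1 : A.inf' hA (fun p => μ (F p)) ≤ μ (∑ p ∈ A, F p) :=
      mu_sum_le hμ A F _ fun p hp => inf'_le _ hp
    calc b < μ (F q) := h q hq
      _ = _ := hqe.symm
      _ ≤ _ := h1


end MuFacts

/-! #### `φ`-expansions -/

section Expansion

variable {φ : Polynomial K}

lemma pow_monic (hm : φ.Monic) (u : ℕ) : (φ ^ u).Monic := hm.pow u

lemma deg_pow_le_pow (hm : φ.Monic) {a b : ℕ} (h : a ≤ b) :
    (φ ^ a).degree ≤ (φ ^ b).degree := by
  obtain ⟨t, rfl⟩ := Nat.exists_eq_add_of_le h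
  rw [pow_add, degree_mul]
  exact le_add_of_nonneg_right (zero_le_degree_iff.mpr (hm.pow t).ne_zero)

lemma deg_pow_ge (hm : φ.Monic) {u : ℕ} (hu : 1 ≤ u) : φ.degree ≤ (φ ^ u).degree := by
  have := deg_pow_le_pow hm hu
  rwa [pow_one] at this

/-- degree bound for sums `∑ E w * φ^w` -/
lemma deg_rep_lt (hm : φ.Monic) (E : ℕ → Polynomial K)
    (hdeg : ∀ w, (E w).degree < φ.degree) (m : ℕ) :
    (∑ w ∈ range m, E w * φ ^ w).degree < (φ ^ m).degree := by
  refine lt_of_le_of_lt (degree_sum_le _ _) ?_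
  rw [Finset.sup_lt_iff (by
    rw [bot_lt_iff_ne_bot]; exact degree_ne_bot.mpr (hm.pow m).ne_zero)]
  intro w hw
  rw [mem_range] at hw
  calc (E w * φ ^ w).degree ≤ (E w).degree + (φ ^ w).degree := degree_mul_le _ _
    _ < φ.degree + (φ ^ w).degree := by
        apply (WithBot.add_lt_add_iff_right (degree_ne_bot.mpr (hm.pow w).ne_zero)).mpr
        exact hdeg w
    _ = (φ ^ (w + 1)).degree := by rw [pow_succ, degree_mul]; exact add_comm _ _
    _ ≤ (φ ^ m).degree := deg_pow_le_pow hm (by omega)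

lemma rep_div_pow (hm : φ.Monic) (E : ℕ → Polynomial K)
    (hdeg : ∀ w, (E w).degree < φ.degree) (M u : ℕ) :
    (∑ w ∈ range (M + 1), E w * φ ^ w) /ₘ (φ ^ u) =
      ∑ w ∈ range (M + 1 - u), E (u + w) * φ ^ w := by
  rcases le_or_gt u (M + 1) with hu | hu
  · obtain ⟨t, ht⟩ := Nat.exists_eq_add_of_le hu
    have hsplit : ∑ w ∈ range (M + 1), E w * φ ^ w =
        (∑ w ∈ range u, E w * φ ^ w) +
          (φ ^ u) * ∑ w ∈ range t, E (u + w) * φ ^ w := by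
      rw [ht, Finset.sum_range_add, Finset.mul_sum]
      congr 1
      refine Finset.sum_congr rfl fun w _ => ?_
      rw [pow_add]; ring
    have key := div_modByMonic_unique (f := ∑ w ∈ range (M + 1), E w * φ ^ w)
      (∑ w ∈ range t, E (u + w) * φ ^ w) (∑ w ∈ range u, E w * φ ^ w) (hm.pow u)
      ⟨hsplit.symm, deg_rep_lt hm E hdeg u⟩
    rw [key.1, show M + 1 - u = t from by omega]
  · have h0 : M + 1 - u = 0 := by omega
    rw [h0, Finset.range_zero, Finset.sum_empty]
    rw [(divByMonic_eq_zero_iff (hm.pow u)).mpr]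
    calc (∑ w ∈ range (M + 1), E w * φ ^ w).degree < (φ ^ (M+1)).degree :=
          deg_rep_lt hm E hdeg (M+1)
      _ ≤ (φ ^ u).degree := deg_pow_le_pow hm (by omega)

lemma rep_mod (hm : φ.Monic) (E : ℕ → Polynomial K)
    (hdeg : ∀ w, (E w).degree < φ.degree) (M : ℕ) :
    (∑ w ∈ range (M + 1), E w * φ ^ w) %ₘ φ = E 0 := by
  have hsplit : ∑ w ∈ range (M + 1), E w * φ ^ w =
      E 0 + φ * ∑ w ∈ range M, E (w + 1) * φ ^ w := by
    rw [Finset.sum_range_succ', pow_zero, mul_one, add_comm, Finset.mul_sum]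
    congr 1
    refine Finset.sum_congr rfl fun w _ => ?_
    rw [pow_succ]; ring
  exact (div_modByMonic_unique (∑ w ∈ range M, E (w + 1) * φ ^ w) (E 0) hm
    ⟨hsplit.symm, hdeg 0⟩).2

/-- master lemma : coefficients of any admissible representation are the `expCoeff`s -/
lemma expCoeff_of_rep (hm : φ.Monic) {f : Polynomial K} (E : ℕ → Polynomial K) (M : ℕ)
    (hdeg : ∀ w, (E w).degree < φ.degree)
    (hf : f = ∑ w ∈ range (M + 1), E w * φ ^ w) (u : ℕ) :
    expCoeff φ f u = if u ≤ M then E u else 0 := by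
  rw [expCoeff, hf, rep_div_pow hm E hdeg M u]
  rcases le_or_gt u M with hu | hu
  · rw [if_pos hu]
    have ht : M + 1 - u = (M - u) + 1 := by omega
    rw [ht, rep_mod hm (fun w => E (u + w)) (fun w => hdeg _) (M - u), add_zero]
  · rw [if_neg (by omega)]
    have ht : M + 1 - u = 0 := by omega
    rw [ht, Finset.range_zero, Finset.sum_empty, zero_modByMonic]

lemma expCoeff_eq_zero (hm : φ.Monic) (hd : 0 < φ.natDegree) {f : Polynomial K} {u : ℕ}
    (hu : f.natDegree < u) : expCoeff φ f u = 0 := by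
  rw [expCoeff, (divByMonic_eq_zero_iff (hm.pow u)).mpr, zero_modByMonic]
  have h1 : (φ ^ u).natDegree = u * φ.natDegree := hm.natDegree_pow u
  have h2 : f.natDegree < u * φ.natDegree := by
    calc f.natDegree < u := hu
      _ = u * 1 := (mul_one u).symm
      _ ≤ u * φ.natDegree := Nat.mul_le_mul_left u hd
  calc f.degree ≤ (f.natDegree : WithBot ℕ) := degree_le_natDegree
    _ < ((φ ^ u).natDegree : WithBot ℕ) := by
        rw [h1]; exact_mod_cast h2
    _ = (φ ^ u).degree := (degree_eq_natDegree (hm.pow u).ne_zero).symm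

lemma expCoeff_deg_lt (hm : φ.Monic) (hd : 0 < φ.natDegree) (f : Polynomial K) (s : ℕ) :
    (expCoeff φ f s).degree < φ.degree :=
  degree_modByMonic_lt _ hm

/-- every polynomial admits an admissible representation -/
lemma exists_rep (hm : φ.Monic) (hd : 0 < φ.natDegree) (f : Polynomial K) :
    ∃ (M : ℕ) (E : ℕ → Polynomial K), (∀ w, (E w).degree < φ.degree) ∧
      f = ∑ w ∈ range (M + 1), E w * φ ^ w := by
  have hbot : (⊥ : WithBot ℕ) < φ.degree :=
    bot_lt_iff_ne_bot.mpr (fun h => hm.ne_zero (degree_eq_bot.mp h))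
  suffices H : ∀ (n : ℕ) (f : Polynomial K), f.natDegree ≤ n →
      ∃ (M : ℕ) (E : ℕ → Polynomial K), (∀ w, (E w).degree < φ.degree) ∧
        f = ∑ w ∈ range (M + 1), E w * φ ^ w from H f.natDegree f le_rfl
  intro n
  induction n using Nat.strong_induction_on with
  | _ n ih =>
  intro f hfn
  rcases lt_or_ge f.degree φ.degree with hlt | hge
  · refine ⟨0, fun w => Nat.rec f (fun _ _ => 0) w, fun w => ?_, ?_⟩
    · cases w with
      | zero => exact hlt
      | succ k => exact lt_of_le_of_lt (by rw [degree_zero]) hbot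
    · rw [Finset.sum_range_one, pow_zero, mul_one]; rfl
  · have hf0 : f ≠ 0 := by
      intro h
      rw [h, degree_zero, le_bot_iff] at hge
      exact hm.ne_zero (degree_eq_bot.mp hge)
    have h1 : 0 < f.natDegree := by
      have := natDegree_le_natDegree hge
      omega
    have hqdeg : (f /ₘ φ).natDegree < n := by
      rw [natDegree_divByMonic f hm]
      omega
    obtain ⟨M, E, hEdeg, hEf⟩ := ih (f /ₘ φ).natDegree hqdeg (f /ₘ φ) le_rfl
    refine ⟨M + 1, fun w => Nat.rec (f %ₘ φ) (fun k _ => E k) w, fun w => ?_, ?_⟩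
    · cases w with
      | zero => exact degree_modByMonic_lt f hm
      | succ k => exact hEdeg k
    · rw [Finset.sum_range_succ'
        (fun w => (Nat.rec (f %ₘ φ) (fun k _ => E k) w : Polynomial K) * φ ^ w) (M + 1)]
      conv_lhs => rw [← modByMonic_add_div f φ]
      rw [pow_zero, mul_one, add_comm (f %ₘ φ) (φ * (f /ₘ φ))]
      congr 1
      rw [hEf, Finset.mul_sum]
      exact Finset.sum_congr rfl fun w _ => by rw [pow_succ]; ring

lemma exp_sum (hm : φ.Monic) (hd : 0 < φ.natDegree) {f : Polynomial K} {N : ℕ}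
    (hN : f.natDegree ≤ N) :
    f = ∑ w ∈ range (N + 1), expCoeff φ f w * φ ^ w := by
  obtain ⟨M, E, hEdeg, hEf⟩ := exists_rep hm hd f
  have hc := expCoeff_of_rep hm E M hEdeg hEf
  have h1 : ∑ w ∈ range (max M N + 1), expCoeff φ f w * φ ^ w
      = ∑ w ∈ range (M + 1), expCoeff φ f w * φ ^ w := by
    symm
    apply Finset.sum_subset
    · intro x hx; rw [mem_range] at hx ⊢; omega
    · intro x _ hx
      rw [mem_range] at hx
      rw [hc x, if_neg (by omega), zero_mul]
  have h2 : ∑ w ∈ range (M + 1), expCoeff φ f w * φ ^ w = f := by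
    conv_rhs => rw [hEf]
    refine Finset.sum_congr rfl fun w hw => ?_
    rw [mem_range] at hw
    rw [hc w, if_pos (by omega)]
  have h3 : ∑ w ∈ range (max M N + 1), expCoeff φ f w * φ ^ w
      = ∑ w ∈ range (N + 1), expCoeff φ f w * φ ^ w := by
    symm
    apply Finset.sum_subset
    · intro x hx; rw [mem_range] at hx ⊢; omega
    · intro x _ hx
      rw [mem_range] at hx
      rw [expCoeff_eq_zero hm hd (by omega), zero_mul]
  exact h2.symm.trans (h1.symm.trans h3)

lemma expCoeff_add (hm : φ.Monic) (hd : 0 < φ.natDegree) (f g : Polynomial K) (u : ℕ) :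
    expCoeff φ (f + g) u = expCoeff φ f u + expCoeff φ g u := by
  set N := max f.natDegree g.natDegree with hNdef
  have hNf : f.natDegree ≤ N := le_max_left _ _
  have hNg : g.natDegree ≤ N := le_max_right _ _
  have hf2 := exp_sum (f := f) hm hd hNf
  have hg2 := exp_sum (f := g) hm hd hNg
  have hfg : f + g = ∑ w ∈ range (N + 1),
      (expCoeff φ f w + expCoeff φ g w) * φ ^ w := by
    conv_lhs => rw [hf2]
    conv_lhs => rw [hg2]
    rw [← Finset.sum_add_distrib]
    exact Finset.sum_congr rfl fun w _ => (add_mul _ _ _).symm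
  have hdeg : ∀ w, (expCoeff φ f w + expCoeff φ g w).degree < φ.degree := fun w =>
    lt_of_le_of_lt (degree_add_le _ _)
      (max_lt (expCoeff_deg_lt hm hd f w) (expCoeff_deg_lt hm hd g w))
  have hc := expCoeff_of_rep hm _ N hdeg hfg u
  rcases le_or_gt u N with hu | hu
  · rw [hc, if_pos hu]
  · rw [hc, if_neg (not_le.mpr hu),
      expCoeff_eq_zero hm hd (lt_of_le_of_lt (le_max_left _ _) hu),
      expCoeff_eq_zero hm hd (lt_of_le_of_lt (le_max_right _ _) hu), add_zero]

variable {μ : Polynomial K → WithTop Λ} {v : FieldVal K Λ}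

lemma augVal_eq_inf (hμ : IsValT v μ) (hm : φ.Monic) (hd : 0 < φ.natDegree)
    {f : Polynomial K} {N : ℕ} (hN : f.natDegree ≤ N) (γ : WithTop Λ) :
    augVal μ φ γ f = (range (N + 1)).inf' nonempty_range_add_one
      (fun s => μ (expCoeff φ f s) + s • γ) := by
  apply le_antisymm
  · refine le_inf' _ _ fun s hs => ?_
    rcases le_or_gt s f.natDegree with h | h
    · exact inf'_le _ (mem_range.mpr (by omega))
    · rw [expCoeff_eq_zero hm hd h, mu_zero hμ, top_add]
      exact le_top
  · refine le_inf' _ _ fun s hs => ?_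
    rw [mem_range] at hs
    exact inf'_le _ (mem_range.mpr (by omega))

lemma augVal_le_term (hμ : IsValT v μ) (hm : φ.Monic) (hd : 0 < φ.natDegree)
    {f : Polynomial K} {N : ℕ} (hN : f.natDegree ≤ N) (γ : WithTop Λ) {s : ℕ}
    (hs : s ∈ range (N + 1)) :
    augVal μ φ γ f ≤ μ (expCoeff φ f s) + s • γ := by
  rw [augVal_eq_inf hμ hm hd hN γ]
  exact inf'_le _ hs

lemma augVal_of_degree_lt (hμ : IsValT v μ) (hm : φ.Monic) (hd : 0 < φ.natDegree)
    {f : Polynomial K} (hf : f.degree < φ.degree) (γ : WithTop Λ) :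
    augVal μ φ γ f = μ f := by
  have hc0 : expCoeff φ f 0 = f := by
    rw [expCoeff, pow_zero, divByMonic_one, (modByMonic_eq_self_iff hm).mpr hf]
  have hcs : ∀ s : ℕ, 1 ≤ s → expCoeff φ f s = 0 := by
    intro s hs
    rw [expCoeff, (divByMonic_eq_zero_iff (hm.pow s)).mpr
      (lt_of_lt_of_le hf (deg_pow_ge hm hs)), zero_modByMonic]
  apply le_antisymm
  · have := inf'_le (fun s : ℕ => μ (expCoeff φ f s) + s • γ)
      (mem_range.mpr (Nat.succ_pos f.natDegree))
    rw [hc0, zero_smul, add_zero] at this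
    exact this
  · refine le_inf' _ _ fun s hs => ?_
    cases s with
    | zero => rw [hc0, zero_smul, add_zero]
    | succ t => rw [hcs (t+1) (by omega), mu_zero hμ, top_add]; exact le_top

lemma augVal_zero (hμ : IsValT v μ) (hm : φ.Monic) (hd : 0 < φ.natDegree) (γ : WithTop Λ) :
    augVal μ φ γ 0 = ⊤ := by
  rw [augVal_of_degree_lt hμ hm hd (by
    rw [degree_zero]
    exact bot_lt_iff_ne_bot.mpr (fun h => hm.ne_zero (degree_eq_bot.mp h))) γ, mu_zero hμ]

lemma augVal_C (hμ : IsValT v μ) (hm : φ.Monic) (hd : 0 < φ.natDegree) (a : K) (γ : WithTop Λ) :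
    augVal μ φ γ (C a) = v.v a := by
  rw [augVal_of_degree_lt hμ hm hd (lt_of_le_of_lt degree_C_le (by
      rw [degree_eq_natDegree hm.ne_zero]; exact_mod_cast hd)) γ, mu_C hμ]

lemma augVal_one (hμ : IsValT v μ) (hm : φ.Monic) (hd : 0 < φ.natDegree) (γ : WithTop Λ) :
    augVal μ φ γ 1 = 0 := by
  have := augVal_C hμ hm hd 1 γ
  rw [C_1] at this
  rw [this]
  exact v.map_one'

lemma augVal_phi (hμ : IsValT v μ) (hm : φ.Monic) (hd : 0 < φ.natDegree) (γ : WithTop Λ) :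
    augVal μ φ γ φ = γ := by
  have hbot : (⊥ : WithBot ℕ) < φ.degree :=
    bot_lt_iff_ne_bot.mpr (fun h => hm.ne_zero (degree_eq_bot.mp h))
  have hone : (0 : WithBot ℕ) < φ.degree := by
    rw [degree_eq_natDegree hm.ne_zero]; exact_mod_cast hd
  have hrep : φ = ∑ w ∈ range (1 + 1),
      (fun w => if w = 1 then (1 : Polynomial K) else 0) w * φ ^ w := by
    rw [Finset.sum_range_succ, Finset.sum_range_one]
    norm_num
  have hdeg : ∀ w, ((fun w => if w = 1 then (1 : Polynomial K) else 0) w).degree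
      < φ.degree := by
    intro w
    by_cases h : w = 1
    · simp only [h, if_pos rfl]
      exact lt_of_le_of_lt degree_one_le hone
    · simp only [if_neg h, degree_zero]
      exact lt_of_le_of_lt le_rfl hbot
  have hc := expCoeff_of_rep hm _ 1 hdeg hrep
  rw [augVal_eq_inf hμ hm hd (le_refl φ.natDegree) γ]
  apply le_antisymm
  · have h1 : (1 : ℕ) ∈ range (φ.natDegree + 1) := mem_range.mpr (by omega)
    have := inf'_le (fun s : ℕ => μ (expCoeff φ φ s) + s • γ) h1
    rw [hc 1, if_pos (le_refl 1), if_pos rfl] at this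
    rwa [mu_one hμ, one_nsmul, zero_add] at this
  · refine le_inf' _ _ fun s hs => ?_
    by_cases h1 : s = 1
    · subst h1
      rw [hc 1, if_pos (le_refl 1), if_pos rfl, mu_one hμ, one_nsmul, zero_add]
    · have : expCoeff φ φ s = 0 := by
        rcases le_or_gt s 1 with h2 | h2
        · rw [hc s, if_pos h2, if_neg h1]
        · rw [hc s, if_neg (by omega)]
      rw [this, mu_zero hμ, top_add]
      exact le_top

lemma augVal_mono_gamma {γ γ' : WithTop Λ} (h : γ ≤ γ') (f : Polynomial K) :
    augVal μ φ γ f ≤ augVal μ φ γ' f :=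
  inf'_mono_fun' _ fun s _ => add_le_add_right (nsmul_le_nsmul_right h s) _

lemma augVal_add_ge (hμ : IsValT v μ) (hm : φ.Monic) (hd : 0 < φ.natDegree)
    (f g : Polynomial K) (γ : WithTop Λ) :
    min (augVal μ φ γ f) (augVal μ φ γ g) ≤ augVal μ φ γ (f + g) := by
  set N := max (max f.natDegree g.natDegree) (f + g).natDegree with hN
  rw [augVal_eq_inf hμ hm hd (le_trans (le_max_right _ _) (le_refl N)) γ]
  refine le_inf' _ _ fun s hs => ?_
  rw [expCoeff_add hm hd f g s]
  calc min (augVal μ φ γ f) (augVal μ φ γ g)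
      ≤ min (μ (expCoeff φ f s) + s • γ) (μ (expCoeff φ g s) + s • γ) := by
        apply min_le_min
        · rw [augVal_eq_inf hμ hm hd (show f.natDegree ≤ N by omega) γ]
          exact inf'_le _ hs
        · rw [augVal_eq_inf hμ hm hd (show g.natDegree ≤ N by omega) γ]
          exact inf'_le _ hs
    _ = min (μ (expCoeff φ f s)) (μ (expCoeff φ g s)) + s • γ := (min_add_right _ _ _).symm
    _ ≤ μ (expCoeff φ f s + expCoeff φ g s) + s • γ :=
        add_le_add_left (mu_min_le hμ _ _) _

end Expansion

/-! #### Key polynomial facts -/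

section KeyFacts

variable {v : FieldVal K Λ} {μ ρ : Polynomial K → WithTop Λ} {φ : Polynomial K}

/-- the `φ`-adic division step computes `μ` exactly, for `μ`-minimal `φ` -/
lemma exact_min (hμ : IsValT v μ) (hm : φ.Monic) (hmin : IsMuMinimal μ φ)
    (f : Polynomial K) : μ f = min (μ (f %ₘ φ)) (μ φ + μ (f /ₘ φ)) := by
  have hf : f %ₘ φ + φ * (f /ₘ φ) = f := modByMonic_add_div f φ
  have hge : min (μ (f %ₘ φ)) (μ φ + μ (f /ₘ φ)) ≤ μ f := by
    calc min (μ (f %ₘ φ)) (μ φ + μ (f /ₘ φ))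
        = min (μ (f %ₘ φ)) (μ (φ * (f /ₘ φ))) := by rw [mu_mul hμ]
      _ ≤ μ (f %ₘ φ + φ * (f /ₘ φ)) := mu_min_le hμ _ _
      _ = μ f := by rw [hf]
  rcases eq_or_ne (μ (f %ₘ φ)) (μ (φ * (f /ₘ φ)))  with he | hne
  · rcases eq_or_ne (μ (f %ₘ φ)) ⊤ with ht | hnt
    · have : min (μ (f %ₘ φ)) (μ φ + μ (f /ₘ φ)) = ⊤ := by
        rw [ht, ← mu_mul hμ, ← he, ht, min_self]
      rw [this] at hge ⊢
      exact le_antisymm le_top hge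
    · by_contra hne2
      have hlt : min (μ (f %ₘ φ)) (μ φ + μ (f /ₘ φ)) < μ f :=
        lt_of_le_of_ne hge (fun h => hne2 h.symm)
      have hminr : min (μ (f %ₘ φ)) (μ φ + μ (f /ₘ φ)) = μ (f %ₘ φ) := by
        rw [← mu_mul hμ, ← he, min_self]
      rw [hminr] at hlt
      have hdvd : MuDvd μ φ (f %ₘ φ) := by
        refine ⟨-(f /ₘ φ), ?_⟩
        unfold MuEquiv
        have heq : f %ₘ φ - -(f /ₘ φ) * φ = f := by
          linear_combination hf
        rw [heq]
        exact hlt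
      have hr0 : f %ₘ φ ≠ 0 := by
        intro h
        rw [h, mu_zero hμ] at hnt
        exact hnt rfl
      exact hmin.2 (f %ₘ φ) hr0 (degree_modByMonic_lt f hm) hdvd
  · have := mu_add_eq_min hμ hne
    rw [hf] at this
    rw [this, mu_mul hμ]

/-- the recursion formula for augmented valuations -/
lemma augVal_rec (hμ : IsValT v μ) (hm : φ.Monic) (hd : 0 < φ.natDegree)
    {f : Polynomial K} (hge : φ.degree ≤ f.degree) (γ : WithTop Λ) :
    augVal μ φ γ f = min (μ (f %ₘ φ)) (augVal μ φ γ (f /ₘ φ) + γ) := by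
  have hf0 : f ≠ 0 := by
    intro h
    rw [h, degree_zero, le_bot_iff] at hge
    exact hm.ne_zero (degree_eq_bot.mp hge)
  have hN1 : 0 < f.natDegree := by
    have h1 : 0 < φ.degree := by
      rw [degree_eq_natDegree hm.ne_zero]; exact_mod_cast hd
    have := natDegree_le_natDegree hge
    omega
  -- identify the expansion coefficients of `f` in terms of those of `f /ₘ φ`
  obtain ⟨M, E, hEdeg, hEf⟩ := exists_rep hm hd (f /ₘ φ)
  have hcq := expCoeff_of_rep hm E M hEdeg hEf
  have hrepf : f = ∑ w ∈ range (M + 1 + 1),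
      (fun w => Nat.rec (f %ₘ φ) (fun k _ => E k) w : ℕ → Polynomial K) w * φ ^ w := by
    rw [Finset.sum_range_succ'
      (fun w => (Nat.rec (f %ₘ φ) (fun k _ => E k) w : Polynomial K) * φ ^ w) (M + 1)]
    conv_lhs => rw [← modByMonic_add_div f φ]
    rw [pow_zero, mul_one, add_comm (f %ₘ φ) (φ * (f /ₘ φ))]
    congr 1
    rw [hEf, Finset.mul_sum]
    exact Finset.sum_congr rfl fun w _ => by rw [pow_succ]; ring
  have hEdeg' : ∀ w, ((fun w => Nat.rec (f %ₘ φ) (fun k _ => E k) w : ℕ → Polynomial K) w).degree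
      < φ.degree := by
    intro w
    cases w with
    | zero => exact degree_modByMonic_lt f hm
    | succ k => exact hEdeg k
  have hcf := expCoeff_of_rep hm _ (M + 1) hEdeg' hrepf
  have hc0 : expCoeff φ f 0 = f %ₘ φ := by
    rw [hcf 0, if_pos (by omega)]
    rfl
  have hcs : ∀ s : ℕ, expCoeff φ f (s + 1) = expCoeff φ (f /ₘ φ) s := by
    intro s
    rw [hcf (s + 1), hcq s]
    rcases le_or_gt s M with h | h
    · rw [if_pos (by omega), if_pos h]
    · rw [if_neg (by omega), if_neg (by omega)]
  set N := f.natDegree with hNdef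
  have hsplit := inf'_range_split N hN1 (fun s => μ (expCoeff φ f s) + s • γ)
  have hlhs : augVal μ φ γ f =
      (range (N + 1)).inf' nonempty_range_add_one (fun s => μ (expCoeff φ f s) + s • γ) :=
    augVal_eq_inf hμ hm hd le_rfl γ
  have hqdeg : (f /ₘ φ).natDegree ≤ N - 1 := by
    rw [natDegree_divByMonic f hm]
    omega
  have hN : N - 1 + 1 = N := by omega
  have hrhs : augVal μ φ γ (f /ₘ φ) =
      (range N).inf' (nonempty_range_iff.mpr hN1.ne')
        (fun s => μ (expCoeff φ (f /ₘ φ) s) + s • γ) :=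
    (augVal_eq_inf hμ hm hd hqdeg γ).trans (inf'_range_eq hN _ _ _)
  rw [hlhs, hsplit]
  congr 1
  · rw [hc0, zero_smul, add_zero]
  · rw [hrhs, inf'_add_right]
    refine Finset.inf'_congr _ rfl fun s _ => ?_
    rw [hcs s, succ_nsmul, add_assoc]

/-- key valuation formula : `μ` is computed by `φ`-expansions (for `μ`-minimal monic `φ`) -/
lemma mu_eq_augVal (hμ : IsValT v μ) (hm : φ.Monic) (hmin : IsMuMinimal μ φ)
    (f : Polynomial K) : μ f = augVal μ φ (μ φ) f := by
  have hd : 0 < φ.natDegree := hmin.1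
  suffices H : ∀ (n : ℕ) (f : Polynomial K), f.natDegree ≤ n →
      μ f = augVal μ φ (μ φ) f from H f.natDegree f le_rfl
  intro n
  induction n using Nat.strong_induction_on with
  | _ n ih =>
  intro f hfn
  rcases lt_or_ge f.degree φ.degree with hlt | hge
  · rw [augVal_of_degree_lt hμ hm hd hlt]
  · have hf0 : f ≠ 0 := by
      intro h
      rw [h, degree_zero, le_bot_iff] at hge
      exact hm.ne_zero (degree_eq_bot.mp hge)
    have h1 : 0 < f.natDegree := by
      have h2 : 0 < φ.degree := by
        rw [degree_eq_natDegree hm.ne_zero]; exact_mod_cast hd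
      have := natDegree_le_natDegree hge
      omega
    have hqdeg : (f /ₘ φ).natDegree < n := by
      rw [natDegree_divByMonic f hm]
      omega
    have hIH := ih (f /ₘ φ).natDegree hqdeg (f /ₘ φ) le_rfl
    rw [augVal_rec hμ hm hd hge (μ φ), ← hIH, exact_min hμ hm hmin f, add_comm (μ φ) (μ (f /ₘ φ))]

/-- `μ ≤ [μ; φ, γ]` for `γ ≥ μ(φ)` -/
lemma mu_le_augVal (hμ : IsValT v μ) (hm : φ.Monic) (hmin : IsMuMinimal μ φ)
    {γ : WithTop Λ} (hγ : μ φ ≤ γ) (f : Polynomial K) : μ f ≤ augVal μ φ γ f := by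
  rw [mu_eq_augVal hμ hm hmin f]
  exact augVal_mono_gamma hγ f

/-- `μ < [μ; φ, γ]` for `γ > μ(φ)` -/
lemma mu_lt_augVal (hμ : IsValT v μ) (hm : φ.Monic) (hmin : IsMuMinimal μ φ)
    {γ : WithTop Λ} (hγ : μ φ < γ) : μ < augVal μ φ γ := by
  rw [Pi.lt_def]
  refine ⟨fun f => mu_le_augVal hμ hm hmin hγ.le f, φ, ?_⟩
  rw [augVal_phi hμ hm hmin.1 γ]
  exact hγ

/-- any valuation `ρ ≥ μ` with `ρ(φ) ≥ γ` dominates the augmentation -/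
lemma augVal_le_of (hμ : IsValT v μ) (hρ : IsValT v ρ) (hm : φ.Monic) (hd : 0 < φ.natDegree)
    (hle : ∀ g, μ g ≤ ρ g) {γ : WithTop Λ} (hγ : γ ≤ ρ φ) (f : Polynomial K) :
    augVal μ φ γ f ≤ ρ f := by
  conv_rhs => rw [exp_sum (f := f) hm hd le_rfl]
  apply mu_sum_le hρ
  intro s hs
  calc augVal μ φ γ f ≤ μ (expCoeff φ f s) + s • γ :=
        augVal_le_term hμ hm hd le_rfl γ hs
    _ ≤ ρ (expCoeff φ f s) + s • ρ φ := add_le_add (hle _) (nsmul_le_nsmul_right hγ s)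
    _ = ρ (expCoeff φ f s * φ ^ s) := by rw [mu_mul hρ, mu_pow hρ]

/-- the fundamental multiplicative fact about products of small-degree polynomials -/
lemma fact_mul (hμ : IsValT v μ) (hk : IsKeyPol μ φ) {a b : Polynomial K}
    (ha : a.degree < φ.degree) (hb : b.degree < φ.degree) :
    μ ((a * b) %ₘ φ) = μ a + μ b ∧ μ a + μ b ≤ μ φ + μ ((a * b) /ₘ φ) := by
  obtain ⟨hm, hmin, hirr⟩ := hk
  have hab : μ (a * b) = μ a + μ b := mu_mul hμ a b
  have hem := exact_min hμ hm hmin (a * b)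
  have hF2 : μ a + μ b ≤ μ φ + μ ((a * b) /ₘ φ) := by
    rw [← hab, hem]
    exact min_le_right _ _
  refine ⟨?_, hF2⟩
  have hr : μ (a * b) ≤ μ ((a * b) %ₘ φ) := by
    rw [hem]; exact min_le_left _ _
  rcases eq_or_ne (μ ((a * b) %ₘ φ)) (μ (a * b)) with he | hne
  · rw [he, hab]
  · exfalso
    have hlt : μ (a * b) < μ ((a * b) %ₘ φ) := lt_of_le_of_ne hr (fun h => hne h.symm)
    have habne : μ (a * b) ≠ ⊤ := hlt.ne_top
    have ha0 : a ≠ 0 := by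
      intro h
      rw [h, zero_mul, mu_zero hμ] at habne
      exact habne rfl
    have hb0 : b ≠ 0 := by
      intro h
      rw [h, mul_zero, mu_zero hμ] at habne
      exact habne rfl
    have hdvd : MuDvd μ φ (a * b) := by
      refine ⟨(a * b) /ₘ φ, ?_⟩
      unfold MuEquiv
      have heq : a * b - (a * b) /ₘ φ * φ = (a * b) %ₘ φ := by
        linear_combination - modByMonic_add_div (a * b) φ
      rw [heq]
      exact hlt
    rcases hirr.2.2 a b hdvd with hda | hdb
    · exact hmin.2 a ha0 ha hda
    · exact hmin.2 b hb0 hb hdb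

end KeyFacts

section Mul

variable {v : FieldVal K Λ} {μ : Polynomial K → WithTop Λ} {φ : Polynomial K}

/-- multiplicativity of the augmented valuation -/
lemma augVal_mul (hμ : IsValT v μ) (hk : IsKeyPol μ φ) {γ : WithTop Λ} (hγ : μ φ < γ)
    (f g : Polynomial K) :
    augVal μ φ γ (f * g) = augVal μ φ γ f + augVal μ φ γ g := by
  classical
  obtain ⟨hm, hmin, hirr⟩ := hk
  have hd : 0 < φ.natDegree := hmin.1
  have hφtop : μ φ ≠ ⊤ := hirr.1
  rcases eq_or_ne f 0 with rfl | hf0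
  · rw [zero_mul, augVal_zero hμ hm hd, top_add]
  rcases eq_or_ne g 0 with rfl | hg0
  · rw [mul_zero, augVal_zero hμ hm hd, add_top]
  set N := f.natDegree with hNdef
  set M := g.natDegree with hMdef
  set a : ℕ → Polynomial K := fun s => expCoeff φ f s with hadef
  set b : ℕ → Polynomial K := fun t => expCoeff φ g t with hbdef
  set S : Finset (ℕ × ℕ) := range (N + 1) ×ˢ range (M + 1) with hSdef
  set cc : ℕ × ℕ → Polynomial K := fun p => (a p.1 * b p.2) %ₘ φ with hccdef
  set dd : ℕ × ℕ → Polynomial K := fun p => (a p.1 * b p.2) /ₘ φ with hdddef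
  set E : ℕ → Polynomial K := fun u =>
    (∑ p ∈ S.filter (fun p => p.1 + p.2 = u), cc p) +
      (∑ p ∈ S.filter (fun p => p.1 + p.2 + 1 = u), dd p) with hEdef
  have hadeg : ∀ s, (a s).degree < φ.degree := fun s => expCoeff_deg_lt hm hd f s
  have hbdeg : ∀ t, (b t).degree < φ.degree := fun t => expCoeff_deg_lt hm hd g t
  have hfact : ∀ p : ℕ × ℕ,
      μ (cc p) = μ (a p.1) + μ (b p.2) ∧ μ (a p.1) + μ (b p.2) ≤ μ φ + μ (dd p) :=
    fun p => fact_mul hμ ⟨hm, hmin, hirr⟩ (hadeg p.1) (hbdeg p.2)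
  -- the representation of the product
  have hrep : f * g = ∑ u ∈ range (N + M + 1 + 1), E u * φ ^ u := by
    have h1 : f * g = ∑ p ∈ S, (a p.1 * φ ^ p.1) * (b p.2 * φ ^ p.2) := by
      conv_lhs => rw [exp_sum (f := f) hm hd le_rfl]
      conv_lhs => rw [exp_sum (f := g) hm hd le_rfl]
      rw [Finset.sum_mul_sum, hSdef, Finset.sum_product]
    have h2 : ∀ p : ℕ × ℕ, (a p.1 * φ ^ p.1) * (b p.2 * φ ^ p.2) =
        cc p * φ ^ (p.1 + p.2) + dd p * φ ^ (p.1 + p.2 + 1) := by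
      intro p
      have := modByMonic_add_div (a p.1 * b p.2) φ
      calc (a p.1 * φ ^ p.1) * (b p.2 * φ ^ p.2)
          = (a p.1 * b p.2) * φ ^ (p.1 + p.2) := by rw [pow_add]; ring
        _ = (cc p + φ * dd p) * φ ^ (p.1 + p.2) := by rw [hccdef, hdddef]; rw [this]
        _ = cc p * φ ^ (p.1 + p.2) + dd p * φ ^ (p.1 + p.2 + 1) := by
            rw [pow_succ]; ring
    have h3 : f * g = (∑ p ∈ S, cc p * φ ^ (p.1 + p.2)) +
        (∑ p ∈ S, dd p * φ ^ (p.1 + p.2 + 1)) := by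
      rw [h1, ← Finset.sum_add_distrib]
      exact Finset.sum_congr rfl fun p _ => h2 p
    have hmapsc : ∀ p ∈ S, p.1 + p.2 ∈ range (N + M + 1 + 1) := by
      intro p hp
      rw [hSdef, Finset.mem_product, mem_range, mem_range] at hp
      rw [mem_range]; omega
    have hmapsd : ∀ p ∈ S, p.1 + p.2 + 1 ∈ range (N + M + 1 + 1) := by
      intro p hp
      rw [hSdef, Finset.mem_product, mem_range, mem_range] at hp
      rw [mem_range]; omega
    have h4 : ∑ u ∈ range (N + M + 1 + 1),
        (∑ p ∈ S.filter (fun p => p.1 + p.2 = u), cc p) * φ ^ u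
        = ∑ p ∈ S, cc p * φ ^ (p.1 + p.2) := by
      rw [← Finset.sum_fiberwise_of_maps_to hmapsc (fun p => cc p * φ ^ (p.1 + p.2))]
      refine Finset.sum_congr rfl fun u _ => ?_
      rw [Finset.sum_mul]
      refine Finset.sum_congr rfl fun p hp => ?_
      rw [(Finset.mem_filter.mp hp).2]
    have h5 : ∑ u ∈ range (N + M + 1 + 1),
        (∑ p ∈ S.filter (fun p => p.1 + p.2 + 1 = u), dd p) * φ ^ u
        = ∑ p ∈ S, dd p * φ ^ (p.1 + p.2 + 1) := by
      rw [← Finset.sum_fiberwise_of_maps_to hmapsd (fun p => dd p * φ ^ (p.1 + p.2 + 1))]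
      refine Finset.sum_congr rfl fun u _ => ?_
      rw [Finset.sum_mul]
      refine Finset.sum_congr rfl fun p hp => ?_
      rw [(Finset.mem_filter.mp hp).2]
    rw [h3, ← h4, ← h5, ← Finset.sum_add_distrib]
    exact Finset.sum_congr rfl fun u _ => by rw [hEdef]; ring
  have hbotφ : (⊥ : WithBot ℕ) < φ.degree :=
    bot_lt_iff_ne_bot.mpr (fun h => hm.ne_zero (degree_eq_bot.mp h))
  have hdddeg : ∀ p : ℕ × ℕ, (dd p).degree < φ.degree := by
    intro p
    rcases eq_or_ne (a p.1 * b p.2) 0 with hab | hab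
    · rw [hdddef]
      simp only [hab, zero_divByMonic, degree_zero]
      exact hbotφ
    · have ha0 : a p.1 ≠ 0 := fun h => hab (by rw [h, zero_mul])
      have hb0 : b p.2 ≠ 0 := fun h => hab (by rw [h, mul_zero])
      have h1 : (a p.1).natDegree < φ.natDegree := natDegree_lt_natDegree ha0 (hadeg p.1)
      have h2 : (b p.2).natDegree < φ.natDegree := natDegree_lt_natDegree hb0 (hbdeg p.2)
      have h3 : (dd p).natDegree = (a p.1 * b p.2).natDegree - φ.natDegree := by
        rw [hdddef]; exact natDegree_divByMonic _ hm
      have h4 : (a p.1 * b p.2).natDegree = (a p.1).natDegree + (b p.2).natDegree :=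
        natDegree_mul ha0 hb0
      have h5 : (dd p).natDegree < φ.natDegree := by omega
      calc (dd p).degree ≤ ((dd p).natDegree : WithBot ℕ) := degree_le_natDegree
        _ < (φ.natDegree : WithBot ℕ) := by exact_mod_cast h5
        _ = φ.degree := (degree_eq_natDegree hm.ne_zero).symm
  have hEdeg : ∀ u, (E u).degree < φ.degree := by
    intro u
    rw [hEdef]
    refine lt_of_le_of_lt (degree_add_le _ _) (max_lt ?_ ?_)
    · refine lt_of_le_of_lt (degree_sum_le _ _) ?_
      rw [Finset.sup_lt_iff hbotφ]
      intro p _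
      exact degree_modByMonic_lt _ hm
    · refine lt_of_le_of_lt (degree_sum_le _ _) ?_
      rw [Finset.sup_lt_iff hbotφ]
      intro p _
      exact hdddeg p
  have hc := expCoeff_of_rep hm E (N + M + 1) hEdeg hrep
  have hfgdeg : (f * g).natDegree ≤ N + M + 1 :=
    le_trans natDegree_mul_le (by omega)
  -- term-wise lower bounds
  have hterm_f : ∀ s ∈ range (N + 1), augVal μ φ γ f ≤ μ (a s) + s • γ :=
    fun s hs => augVal_le_term hμ hm hd le_rfl γ hs
  have hterm_g : ∀ t ∈ range (M + 1), augVal μ φ γ g ≤ μ (b t) + t • γ :=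
    fun t ht => augVal_le_term hμ hm hd le_rfl γ ht
  have hsplit_cc : ∀ p : ℕ × ℕ, μ (cc p) + (p.1 + p.2) • γ
      = (μ (a p.1) + p.1 • γ) + (μ (b p.2) + p.2 • γ) := by
    intro p
    rw [(hfact p).1, add_nsmul, add_add_add_comm]
  have hbound_c : ∀ p ∈ S, augVal μ φ γ f + augVal μ φ γ g ≤ μ (cc p) + (p.1 + p.2) • γ := by
    intro p hp
    rw [hSdef, Finset.mem_product] at hp
    rw [hsplit_cc p]
    exact add_le_add (hterm_f p.1 hp.1) (hterm_g p.2 hp.2)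
  have hbound_d_aux : ∀ p ∈ S,
      (augVal μ φ γ f + augVal μ φ γ g) + γ ≤ (μ (dd p) + (p.1 + p.2 + 1) • γ) + μ φ := by
    intro p hp
    rw [hSdef, Finset.mem_product] at hp
    calc (augVal μ φ γ f + augVal μ φ γ g) + γ
        ≤ ((μ (a p.1) + p.1 • γ) + (μ (b p.2) + p.2 • γ)) + γ :=
          add_le_add_left (add_le_add (hterm_f p.1 hp.1) (hterm_g p.2 hp.2)) γ
      _ = (μ (a p.1) + μ (b p.2)) + ((p.1 + p.2) • γ + γ) := by
          rw [add_nsmul, add_add_add_comm, add_assoc]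
      _ ≤ (μ φ + μ (dd p)) + ((p.1 + p.2) • γ + γ) := add_le_add_left (hfact p).2 _
      _ = (μ (dd p) + (p.1 + p.2 + 1) • γ) + μ φ := by
          rw [succ_nsmul]
          rw [add_comm (μ φ) (μ (dd p)), add_assoc, add_comm (μ φ), ← add_assoc]
  have hbound_d : ∀ p ∈ S,
      augVal μ φ γ f + augVal μ φ γ g ≤ μ (dd p) + (p.1 + p.2 + 1) • γ := by
    intro p hp
    apply wt_le_of_add_le_add_right hφtop
    calc (augVal μ φ γ f + augVal μ φ γ g) + μ φ
        ≤ (augVal μ φ γ f + augVal μ φ γ g) + γ := add_le_add_right hγ.le _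
      _ ≤ _ := hbound_d_aux p hp
  -- the `≥` direction
  have hge : augVal μ φ γ f + augVal μ φ γ g ≤ augVal μ φ γ (f * g) := by
    rw [augVal_eq_inf hμ hm hd hfgdeg γ]
    refine le_inf' _ _ fun u hu => ?_
    rw [mem_range] at hu
    rw [hc u, if_pos (by omega), hEdef]
    have hX : augVal μ φ γ f + augVal μ φ γ g
        ≤ μ (∑ p ∈ S.filter (fun p => p.1 + p.2 = u), cc p) + u • γ := by
      apply mu_sum_bound hμ
      intro p hp
      obtain ⟨hpS, hpu⟩ := Finset.mem_filter.mp hp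
      rw [← hpu]
      exact hbound_c p hpS
    have hY : augVal μ φ γ f + augVal μ φ γ g
        ≤ μ (∑ p ∈ S.filter (fun p => p.1 + p.2 + 1 = u), dd p) + u • γ := by
      apply mu_sum_bound hμ
      intro p hp
      obtain ⟨hpS, hpu⟩ := Finset.mem_filter.mp hp
      rw [← hpu]
      exact hbound_d p hpS
    calc augVal μ φ γ f + augVal μ φ γ g
        ≤ min (μ (∑ p ∈ S.filter (fun p => p.1 + p.2 = u), cc p) + u • γ)
            (μ (∑ p ∈ S.filter (fun p => p.1 + p.2 + 1 = u), dd p) + u • γ) := le_min hX hY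
      _ = min (μ (∑ p ∈ S.filter (fun p => p.1 + p.2 = u), cc p))
            (μ (∑ p ∈ S.filter (fun p => p.1 + p.2 + 1 = u), dd p)) + u • γ :=
          (min_add_right _ _ _).symm
      _ ≤ _ := add_le_add_left (mu_min_le hμ _ _) _
  -- the `≤` direction
  rcases eq_or_ne (augVal μ φ γ f + augVal μ φ γ g) ⊤ with htop | hne
  · exact le_antisymm (htop ▸ le_top) hge
  obtain ⟨hfne, hgne⟩ : augVal μ φ γ f ≠ ⊤ ∧ augVal μ φ γ g ≠ ⊤ := by
    constructor <;> intro h <;> apply hne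
    · rw [h, top_add]
    · rw [h, add_top]
  -- minimal attaining indices
  have hattf : ∃ s ∈ range (N + 1), μ (a s) + s • γ = augVal μ φ γ f := by
    obtain ⟨s, hs, hseq⟩ := exists_mem_eq_inf' (nonempty_range_add_one)
      (fun s => μ (expCoeff φ f s) + s • γ)
    exact ⟨s, hs, ((augVal_eq_inf hμ hm hd le_rfl γ).trans hseq).symm⟩
  have hattg : ∃ t ∈ range (M + 1), μ (b t) + t • γ = augVal μ φ γ g := by
    obtain ⟨t, ht, hteq⟩ := exists_mem_eq_inf' (nonempty_range_add_one)
      (fun t => μ (expCoeff φ g t) + t • γ)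
    exact ⟨t, ht, ((augVal_eq_inf hμ hm hd le_rfl γ).trans hteq).symm⟩
  set Af : Finset ℕ := (range (N + 1)).filter (fun s => μ (a s) + s • γ = augVal μ φ γ f)
    with hAfdef
  set Ag : Finset ℕ := (range (M + 1)).filter (fun t => μ (b t) + t • γ = augVal μ φ γ g)
    with hAgdef
  have hAfne : Af.Nonempty := by
    obtain ⟨s, hs, hseq⟩ := hattf
    exact ⟨s, Finset.mem_filter.mpr ⟨hs, hseq⟩⟩
  have hAgne : Ag.Nonempty := by
    obtain ⟨t, ht, hteq⟩ := hattg
    exact ⟨t, Finset.mem_filter.mpr ⟨ht, hteq⟩⟩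
  set s0 := Af.min' hAfne with hs0def
  set t0 := Ag.min' hAgne with ht0def
  have hs0mem := Af.min'_mem hAfne
  have ht0mem := Ag.min'_mem hAgne
  obtain ⟨hs0range, hs0eq⟩ := Finset.mem_filter.mp hs0mem
  obtain ⟨ht0range, ht0eq⟩ := Finset.mem_filter.mp ht0mem
  have hminf : ∀ s ∈ range (N + 1), s < s0 → augVal μ φ γ f < μ (a s) + s • γ := by
    intro s hs hlt
    refine lt_of_le_of_ne (hterm_f s hs) fun h => ?_
    have : s ∈ Af := Finset.mem_filter.mpr ⟨hs, h.symm⟩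
    exact absurd (Af.min'_le s this) (not_le.mpr hlt)
  have hming : ∀ t ∈ range (M + 1), t < t0 → augVal μ φ γ g < μ (b t) + t • γ := by
    intro t ht hlt
    refine lt_of_le_of_ne (hterm_g t ht) fun h => ?_
    have : t ∈ Ag := Finset.mem_filter.mpr ⟨ht, h.symm⟩
    exact absurd (Ag.min'_le t this) (not_le.mpr hlt)
  set u0 := s0 + t0 with hu0def
  set p0 : ℕ × ℕ := (s0, t0) with hp0def
  have hp0S : p0 ∈ S := by
    rw [hSdef, Finset.mem_product]
    exact ⟨hs0range, ht0range⟩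
  have hcc0 : μ (cc p0) + u0 • γ = augVal μ φ γ f + augVal μ φ γ g := by
    rw [hsplit_cc p0]
    show (μ (a s0) + s0 • γ) + (μ (b t0) + t0 • γ) = _
    rw [hs0eq, ht0eq]
  have hcc0ne : μ (cc p0) + u0 • γ ≠ ⊤ := by rw [hcc0]; exact hne
  have hu0γne : u0 • γ ≠ ⊤ := fun h => hcc0ne (by rw [h, add_top])
  have hccp0ne : μ (cc p0) ≠ ⊤ := fun h => hcc0ne (by rw [h, top_add])
  -- all other terms at level u0 are strictly bigger
  have hstrict_c : ∀ p ∈ S.filter (fun p => p.1 + p.2 = u0), p ≠ p0 →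
      μ (cc p0) < μ (cc p) := by
    intro p hp hne2
    obtain ⟨hpS, hpu⟩ := Finset.mem_filter.mp hp
    rw [hSdef, Finset.mem_product] at hpS
    have hlt : μ (cc p0) + u0 • γ < μ (cc p) + u0 • γ := by
      rw [hcc0, ← hpu, hsplit_cc p]
      have hps : p.1 ≠ s0 := by
        intro h
        apply hne2
        have : p.2 = t0 := by omega
        rw [hp0def, ← h, ← this]
      rcases lt_or_gt_of_ne hps with h1 | h1
      · exact lt_add_of_lt_of_le hne (hminf p.1 hpS.1 h1) (hterm_g p.2 hpS.2)
      · have h2 : p.2 < t0 := by omega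
        exact lt_add_of_le_of_lt hne (hterm_f p.1 hpS.1) (hming p.2 hpS.2 h2)
    exact wt_lt_of_add_lt_add_right hlt
  have hstrict_d : ∀ p ∈ S.filter (fun p => p.1 + p.2 + 1 = u0),
      μ (cc p0) < μ (dd p) := by
    intro p hp
    obtain ⟨hpS, hpu⟩ := Finset.mem_filter.mp hp
    have haux := hbound_d_aux p hpS
    rw [hpu] at haux
    have h1 : (augVal μ φ γ f + augVal μ φ γ g) + μ φ
        < (μ (dd p) + u0 • γ) + μ φ := by
      calc (augVal μ φ γ f + augVal μ φ γ g) + μ φ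
          < (augVal μ φ γ f + augVal μ φ γ g) + γ :=
            (WithTop.add_lt_add_iff_left hne).mpr hγ
        _ ≤ _ := haux
    have h2 : augVal μ φ γ f + augVal μ φ γ g < μ (dd p) + u0 • γ :=
      wt_lt_of_add_lt_add_right h1
    rw [← hcc0] at h2
    exact wt_lt_of_add_lt_add_right h2
  have hEu0 : μ (E u0) = μ (cc p0) := by
    rw [hEdef]
    have hp0filter : p0 ∈ S.filter (fun p => p.1 + p.2 = u0) :=
      Finset.mem_filter.mpr ⟨hp0S, rfl⟩
    have hX : μ (∑ p ∈ S.filter (fun p => p.1 + p.2 = u0), cc p) = μ (cc p0) :=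
      mu_sum_eq hμ (S.filter (fun p => p.1 + p.2 = u0)) cc hp0filter hstrict_c
    have hY : μ (cc p0) < μ (∑ p ∈ S.filter (fun p => p.1 + p.2 + 1 = u0), dd p) :=
      mu_sum_gt hμ _ _ hccp0ne hstrict_d
    rw [← hX] at hY ⊢
    exact mu_add_eq_left hμ hY
  have hle : augVal μ φ γ (f * g) ≤ augVal μ φ γ f + augVal μ φ γ g := by
    have hu0mem : u0 ∈ range (N + M + 1 + 1) := by
      rw [mem_range] at hs0range ht0range ⊢
      omega
    calc augVal μ φ γ (f * g) ≤ μ (expCoeff φ (f * g) u0) + u0 • γ :=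
          augVal_le_term hμ hm hd hfgdeg γ hu0mem
      _ = μ (E u0) + u0 • γ := by
          rw [hc u0, if_pos (by rw [mem_range] at hu0mem; omega)]
      _ = μ (cc p0) + u0 • γ := by rw [hEu0]
      _ = _ := hcc0
  exact le_antisymm hle hge

/-- the augmented valuation is a valuation in `T` -/
lemma augVal_isValT (hμ : IsValT v μ) (hk : IsKeyPol μ φ) {γ : WithTop Λ}
    (hγ : μ φ < γ) : IsValT v (augVal μ φ γ) := by
  obtain ⟨hm, hmin, hirr⟩ := hk
  have hd : 0 < φ.natDegree := hmin.1
  exact ⟨augVal_one hμ hm hd γ, augVal_zero hμ hm hd γ,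
    augVal_mul hμ ⟨hm, hmin, hirr⟩ hγ,
    fun f g => augVal_add_ge hμ hm hd f g γ, fun aa => augVal_C hμ hm hd aa γ⟩

end Mul

section Tangent

variable {v : FieldVal K Λ} {μ ν ρ : Polynomial K → WithTop Λ} {φ : Polynomial K}

/-- tangent directions are nonempty -/
lemma td_nonempty (hμ : IsValT v μ) (hν : IsValT v ν) (hlt : μ < ν) :
    ∃ φ : Polynomial K, φ ∈ TangentDir μ ν := by
  obtain ⟨hle, f, hf⟩ := Pi.lt_def.mp hlt
  have hf0 : f ≠ 0 := by
    intro h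
    rw [h, mu_zero hμ, mu_zero hν] at hf
    exact absurd hf (lt_irrefl _)
  obtain ⟨g, hgm, hgdeg, hginc⟩ := monicize hμ hν hf0 hf
  have hP : ∃ n : ℕ, ∃ g : Polynomial K, g.Monic ∧ μ g < ν g ∧ g.natDegree = n :=
    ⟨g.natDegree, g, hgm, hginc, rfl⟩
  classical
  obtain ⟨ψ, hψm, hψinc, hψdeg⟩ := Nat.find_spec hP
  refine ⟨ψ, hψm, hψinc, fun χ hχm hχinc => ?_⟩
  rw [hψdeg]
  exact Nat.find_min' hP ⟨χ, hχm, hχinc, rfl⟩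

/-- below the tangent degree, `ν` agrees with `μ` -/
lemma td_small (hμ : IsValT v μ) (hν : IsValT v ν) (hle : μ ≤ ν)
    (htd : φ ∈ TangentDir μ ν) {f : Polynomial K} (hf : f.degree < φ.degree) :
    ν f = μ f := by
  rcases eq_or_ne f 0 with rfl | hf0
  · rw [mu_zero hμ, mu_zero hν]
  have hfd : f.natDegree < φ.natDegree := natDegree_lt_natDegree hf0 hf
  set g := f * C (f.leadingCoeff)⁻¹ with hgdef
  have hgm : g.Monic := monic_mul_leadingCoeff_inv hf0
  have hgdeg : g.natDegree = f.natDegree :=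
    natDegree_mul_C (inv_ne_zero (leadingCoeff_ne_zero.mpr hf0))
  have hgeq : μ g = ν g := by
    rcases eq_or_ne (μ g) (ν g) with h | h
    · exact h
    · exfalso
      have hginc : μ g < ν g := lt_of_le_of_ne (hle g) h
      have := htd.2.2 g hgm hginc
      omega
  exact (mu_eq_of_monic_eq hμ hν hf0 hgeq).symm

lemma td_natDegree_pos (hμ : IsValT v μ) (hν : IsValT v ν)
    (htd : φ ∈ TangentDir μ ν) : 0 < φ.natDegree := by
  by_contra h
  have h0 : φ.natDegree = 0 := by omega
  have : φ = 1 := htd.1.natDegree_eq_zero.mp h0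
  have h1 := htd.2.1
  rw [this, mu_one hμ, mu_one hν] at h1
  exact absurd h1 (lt_irrefl _)

/-- `μ`-divisibility by a tangent-direction polynomial forces strict increase -/
lemma muDvd_imp_inc (hμ : IsValT v μ) (hν : IsValT v ν) (hle : μ ≤ ν)
    (hφinc : μ φ < ν φ) {g : Polynomial K} (hdvd : MuDvd μ φ g) : μ g < ν g := by
  obtain ⟨w, hw⟩ := hdvd
  unfold MuEquiv at hw
  rcases eq_or_ne (μ g) (ν g) with hgeq | hgne
  swap
  · exact lt_of_le_of_ne (hle g) hgne
  exfalso
  have hgtop : μ g ≠ ⊤ := hw.ne_top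
  have hwφ : μ (w * φ) = μ g := by
    have h1 : min (μ g) (μ (-(g - w * φ))) ≤ μ (w * φ) := by
      have heq : w * φ = g + -(g - w * φ) := by ring
      calc min (μ g) (μ (-(g - w * φ))) ≤ μ (g + -(g - w * φ)) := mu_min_le hμ _ _
        _ = μ (w * φ) := by rw [← heq]
    rw [mu_neg hμ, min_eq_left hw.le] at h1
    rcases eq_or_ne (μ (w * φ)) (μ g) with h | h
    · exact h
    · exfalso
      have h3 : μ g < μ (w * φ) := lt_of_le_of_ne h1 (fun hh => h hh.symm)
      have h4 : min (μ (g - w * φ)) (μ (w * φ)) ≤ μ g := by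
        have heq : g = (g - w * φ) + w * φ := by ring
        calc min (μ (g - w * φ)) (μ (w * φ)) ≤ μ ((g - w * φ) + w * φ) := mu_min_le hμ _ _
          _ = μ g := by rw [← heq]
      exact absurd h4 (not_le.mpr (lt_min hw h3))
  have hwtop : μ w ≠ ⊤ := by
    intro h
    rw [mu_mul hμ, h, top_add] at hwφ
    exact hgtop hwφ.symm
  have hνwφ : μ g < ν (w * φ) := by
    rw [mu_mul hν]
    calc μ g = μ w + μ φ := by rw [← mu_mul hμ, hwφ]
      _ < μ w + ν φ := (WithTop.add_lt_add_iff_left hwtop).mpr hφinc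
      _ ≤ ν w + ν φ := add_le_add_left (hle w) _
  have hνsub : μ g < ν (g - w * φ) := lt_of_lt_of_le hw (hle _)
  have hcon : μ g < ν g := by
    have heq : g = (g - w * φ) + w * φ := by ring
    calc μ g < min (ν (g - w * φ)) (ν (w * φ)) := lt_min hνsub hνwφ
      _ ≤ ν ((g - w * φ) + w * φ) := mu_min_le hν _ _
      _ = ν g := by rw [← heq]
  rw [hgeq] at hcon
  exact absurd hcon (lt_irrefl _)

/-- a tangent-direction polynomial is `μ`-minimal -/
lemma td_minimal (hμ : IsValT v μ) (hν : IsValT v ν) (hle : μ ≤ ν)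
    (htd : φ ∈ TangentDir μ ν) : IsMuMinimal μ φ := by
  refine ⟨td_natDegree_pos hμ hν htd, fun f hf0 hfdeg hdvd => ?_⟩
  have h1 : μ f < ν f := muDvd_imp_inc hμ hν hle htd.2.1 hdvd
  have h2 : ν f = μ f := td_small hμ hν hle htd hfdeg
  rw [h2] at h1
  exact absurd h1 (lt_irrefl _)

/-- increase implies the canonical remainder grows in value -/
lemma inc_imp_mod (hμ : IsValT v μ) (hν : IsValT v ν) (hle : μ ≤ ν)
    (htd : φ ∈ TangentDir μ ν) {g : Polynomial K} (hg : μ g < ν g) :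
    μ g < μ (g %ₘ φ) := by
  have hm : φ.Monic := htd.1
  have hmin : IsMuMinimal μ φ := td_minimal hμ hν hle htd
  rcases lt_or_ge g.degree φ.degree with hlt | hge
  · exfalso
    rw [td_small hμ hν hle htd hlt] at hg
    exact absurd hg (lt_irrefl _)
  have hgtop : μ g ≠ ⊤ := hg.ne_top
  have hem := exact_min hμ hm hmin g
  rcases eq_or_ne (μ (g %ₘ φ)) (μ g) with heq | hne
  · exfalso
    have hνr : ν (g %ₘ φ) = μ g := by
      rw [td_small hμ hν hle htd (degree_modByMonic_lt g hm), heq]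
    have hνφq : μ g < ν (φ * (g /ₘ φ)) := by
      rcases eq_or_ne (μ (g /ₘ φ)) ⊤ with hq | hq
      · have hq2 : ν (g /ₘ φ) = ⊤ := le_antisymm le_top (hq ▸ hle _)
        rw [mu_mul hν, hq2, add_top]
        exact lt_top_iff_ne_top.mpr hgtop
      · have h1 : μ g ≤ μ φ + μ (g /ₘ φ) := hem ▸ min_le_right _ _
        calc μ g ≤ μ φ + μ (g /ₘ φ) := h1
          _ < ν φ + μ (g /ₘ φ) := (WithTop.add_lt_add_iff_right hq).mpr htd.2.1
          _ ≤ ν φ + ν (g /ₘ φ) := add_le_add_right (hle _) _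
          _ = ν (φ * (g /ₘ φ)) := (mu_mul hν _ _).symm
    have hcon : μ g < ν (g %ₘ φ) := by
      have heq2 : g %ₘ φ = g + -(φ * (g /ₘ φ)) := by
        linear_combination modByMonic_add_div g φ
      calc μ g < min (ν g) (ν (-(φ * (g /ₘ φ)))) := by
            rw [mu_neg hν]
            exact lt_min hg hνφq
        _ ≤ ν (g + -(φ * (g /ₘ φ))) := mu_min_le hν _ _
        _ = ν (g %ₘ φ) := by rw [← heq2]
    rw [hνr] at hcon
    exact absurd hcon (lt_irrefl _)
  · have h1 : μ g ≤ μ (g %ₘ φ) := hem ▸ min_le_left _ _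
    exact lt_of_le_of_ne h1 (fun hh => hne hh.symm)

lemma inc_imp_muDvd (hμ : IsValT v μ) (hν : IsValT v ν) (hle : μ ≤ ν)
    (htd : φ ∈ TangentDir μ ν) {g : Polynomial K} (hg : μ g < ν g) :
    MuDvd μ φ g := by
  refine ⟨g /ₘ φ, ?_⟩
  unfold MuEquiv
  have hsub : g - g /ₘ φ * φ = g %ₘ φ := by
    linear_combination - modByMonic_add_div g φ
  rw [hsub]
  exact inc_imp_mod hμ hν hle htd hg

/-- a tangent-direction polynomial is a key polynomial -/
lemma kp_of_td (hμ : IsValT v μ) (hν : IsValT v ν) (hle : μ ≤ ν)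
    (htd : φ ∈ TangentDir μ ν) : IsKeyPol μ φ := by
  obtain ⟨hm, hφinc, hmindeg⟩ := htd
  have hmin : IsMuMinimal μ φ := td_minimal hμ hν hle ⟨hm, hφinc, hmindeg⟩
  refine ⟨hm, hmin, hφinc.ne_top, ?_, ?_⟩
  · -- not a unit
    rintro ⟨w, hw⟩
    unfold MuEquiv at hw
    have h0 : μ (w * φ) = 0 := by
      have hup : μ (w * φ) ≤ 0 := by
        have heq : (1 : Polynomial K) = w * φ + -(w * φ - 1) := by ring
        have h1 : min (μ (w * φ)) (μ (-(w * φ - 1))) ≤ μ (1 : Polynomial K) := by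
          calc min (μ (w * φ)) (μ (-(w * φ - 1))) ≤ μ (w * φ + -(w * φ - 1)) :=
                mu_min_le hμ _ _
            _ = μ 1 := by rw [← heq]
        rw [mu_one hμ, mu_neg hμ, min_eq_left hw.le] at h1
        exact h1
      rcases eq_or_ne (μ (w * φ)) 0 with h | h
      · exact h
      · exfalso
        have hlt : μ (w * φ) < 0 := lt_of_le_of_ne hup h
        have h2 : min (μ (1 : Polynomial K)) (μ (w * φ - 1)) ≤ μ (w * φ) := by
          have heq : w * φ = 1 + (w * φ - 1) := by ring
          calc min (μ (1 : Polynomial K)) (μ (w * φ - 1)) ≤ μ (1 + (w * φ - 1)) :=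
                mu_min_le hμ _ _
            _ = μ (w * φ) := by rw [← heq]
        rw [mu_one hμ] at h2
        exact absurd h2 (not_le.mpr (lt_min hlt hw))
    have hwtop : μ w ≠ ⊤ := by
      intro h
      rw [mu_mul hμ, h, top_add] at h0
      exact (by simp : (⊤ : WithTop Λ) ≠ 0) h0
    have hν1 : (0 : WithTop Λ) < ν (w * φ) := by
      rw [mu_mul hν]
      calc (0 : WithTop Λ) = μ w + μ φ := by rw [← mu_mul hμ, h0]
        _ < μ w + ν φ := (WithTop.add_lt_add_iff_left hwtop).mpr hφinc
        _ ≤ ν w + ν φ := add_le_add_left (hle w) _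
    have hν2 : (0 : WithTop Λ) < ν (w * φ - 1) := by
      calc (0 : WithTop Λ) = μ (w * φ) := h0.symm
        _ < μ (w * φ - 1) := hw
        _ ≤ ν (w * φ - 1) := hle _
    have hcon : (0 : WithTop Λ) < ν 1 := by
      have heq : (1 : Polynomial K) = w * φ + -(w * φ - 1) := by ring
      calc (0 : WithTop Λ) < min (ν (w * φ)) (ν (-(w * φ - 1))) := by
            rw [mu_neg hν]
            exact lt_min hν1 hν2
        _ ≤ ν (w * φ + -(w * φ - 1)) := mu_min_le hν _ _
        _ = ν 1 := by rw [← heq]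
    rw [mu_one hν] at hcon
    exact absurd hcon (lt_irrefl _)
  · -- primality
    intro f h hdvd
    have hinc : μ (f * h) < ν (f * h) := muDvd_imp_inc hμ hν hle hφinc hdvd
    have hor : μ f < ν f ∨ μ h < ν h := by
      by_contra hcon
      push_neg at hcon
      have h1 : ν f = μ f := le_antisymm hcon.1 (hle f)
      have h2 : ν h = μ h := le_antisymm hcon.2 (hle h)
      rw [mu_mul hμ, mu_mul hν, h1, h2] at hinc
      exact absurd hinc (lt_irrefl _)
    rcases hor with h1 | h1
    · exact Or.inl (inc_imp_muDvd hμ hν hle ⟨hm, hφinc, hmindeg⟩ h1)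
    · exact Or.inr (inc_imp_muDvd hμ hν hle ⟨hm, hφinc, hmindeg⟩ h1)

/-- the increase at a tangent direction propagates to every node of `(μ, ν]` -/
lemma td_inc_all (hμ : IsValT v μ) (hν : IsValT v ν) (hρ : IsValT v ρ)
    (hleν : μ ≤ ν) (htd : φ ∈ TangentDir μ ν) (hltρ : μ < ρ) (hρν : ρ ≤ ν) :
    μ φ < ρ φ := by
  have hk : IsKeyPol μ φ := kp_of_td hμ hν hleν htd
  have hm : φ.Monic := hk.1
  have hd : 0 < φ.natDegree := hk.2.1.1
  have hφtop : μ φ ≠ ⊤ := hk.2.2.1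
  have hleρ : μ ≤ ρ := le_of_lt hltρ
  by_contra hc
  have hρφ : ρ φ = μ φ := le_antisymm (not_lt.mp hc) (hleρ φ)
  obtain ⟨ψ, hψm, hψinc, hψmin⟩ := td_nonempty hμ hρ hltρ
  have hψν : μ ψ < ν ψ := lt_of_lt_of_le hψinc (hρν ψ)
  have hψtop : μ ψ ≠ ⊤ := hψinc.ne_top
  have hψd : 0 < ψ.natDegree := by
    by_contra h
    have h0 : ψ.natDegree = 0 := by omega
    have h1 : ψ = 1 := hψm.natDegree_eq_zero.mp h0
    rw [h1, mu_one hμ, mu_one hρ] at hψinc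
    exact absurd hψinc (lt_irrefl _)
  set w := ψ /ₘ φ with hwdef
  have hmod : μ ψ < μ (ψ %ₘ φ) := inc_imp_mod hμ hν hleν htd hψν
  have hsub : ψ - w * φ = ψ %ₘ φ := by
    linear_combination - modByMonic_add_div ψ φ
  have hρ1 : μ ψ < ρ (ψ - w * φ) := by
    rw [hsub]
    exact lt_of_lt_of_le hmod (hleρ _)
  have hρwφ : μ ψ < ρ (w * φ) := by
    have heq : w * φ = ψ + -(ψ - w * φ) := by ring
    calc μ ψ < min (ρ ψ) (ρ (-(ψ - w * φ))) := by
          rw [mu_neg hρ]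
          exact lt_min hψinc hρ1
      _ ≤ ρ (ψ + -(ψ - w * φ)) := mu_min_le hρ _ _
      _ = ρ (w * φ) := by rw [← heq]
  have hμwφ : μ (w * φ) = μ ψ := by
    have h1 : min (μ ψ) (μ (-(ψ - w * φ))) ≤ μ (w * φ) := by
      have heq : w * φ = ψ + -(ψ - w * φ) := by ring
      calc min (μ ψ) (μ (-(ψ - w * φ))) ≤ μ (ψ + -(ψ - w * φ)) := mu_min_le hμ _ _
        _ = μ (w * φ) := by rw [← heq]
    rw [mu_neg hμ, hsub, min_eq_left hmod.le] at h1
    rcases eq_or_ne (μ (w * φ)) (μ ψ) with h | h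
    · exact h
    · exfalso
      have h3 : μ ψ < μ (w * φ) := lt_of_le_of_ne h1 (fun hh => h hh.symm)
      have h4 : min (μ (ψ - w * φ)) (μ (w * φ)) ≤ μ ψ := by
        have heq : ψ = (ψ - w * φ) + w * φ := by ring
        calc min (μ (ψ - w * φ)) (μ (w * φ)) ≤ μ ((ψ - w * φ) + w * φ) := mu_min_le hμ _ _
          _ = μ ψ := by rw [← heq]
      rw [hsub] at h4
      exact absurd h4 (not_le.mpr (lt_min hmod h3))
  have hwtop : μ w ≠ ⊤ := by
    intro h
    rw [mu_mul hμ, h, top_add] at hμwφ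
    exact hψtop hμwφ.symm
  have hw0 : w ≠ 0 := by
    intro h
    rw [h, mu_zero hμ] at hwtop
    exact hwtop rfl
  have hρw : μ w < ρ w := by
    have h1 : μ w + μ φ < ρ w + μ φ := by
      calc μ w + μ φ = μ (w * φ) := (mu_mul hμ _ _).symm
        _ = μ ψ := hμwφ
        _ < ρ (w * φ) := hρwφ
        _ = ρ w + ρ φ := mu_mul hρ _ _
        _ = ρ w + μ φ := by rw [hρφ]
    exact wt_lt_of_add_lt_add_right h1
  obtain ⟨w1, hw1m, hw1deg, hw1inc⟩ := monicize hμ hρ hw0 hρw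
  have hwdeg : w.natDegree = ψ.natDegree - φ.natDegree := natDegree_divByMonic ψ hm
  have hcon := hψmin w1 hw1m hw1inc
  omega

end Tangent

section Assemble

variable {v : FieldVal K Λ} {μ : Polynomial K → WithTop Λ} {φ : Polynomial K}

/-- `φ` is a tangent direction of its own augmentation -/
lemma augVal_td (hμ : IsValT v μ) (hk : IsKeyPol μ φ) {γ : WithTop Λ} (hγ : μ φ < γ) :
    φ ∈ TangentDir μ (augVal μ φ γ) := by
  have hm : φ.Monic := hk.1
  have hd : 0 < φ.natDegree := hk.2.1.1
  refine ⟨hm, ?_, ?_⟩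
  · rw [augVal_phi hμ hm hd γ]
    exact hγ
  · intro ψ hψm hψinc
    by_contra h
    have hψd : ψ.degree < φ.degree := by
      rw [degree_eq_natDegree hψm.ne_zero, degree_eq_natDegree hm.ne_zero]
      exact_mod_cast (by omega : ψ.natDegree < φ.natDegree)
    rw [augVal_of_degree_lt hμ hm hd hψd γ] at hψinc
    exact absurd hψinc (lt_irrefl _)

end Assemble

end MLVAux

/-- The relation `∼_tan` is an equivalence relation on `{ν ∈ T : μ < ν}`; the class of
`[μ; φ, γ]` does not depend on `γ`; the induced map `t_μ` from `KP(μ)` to the set of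
tangent directions `TD(μ)` is surjective, and its fibres are the `μ`-equivalence classes,
so it induces a bijection between `KP(μ)/∼_μ` and `TD(μ)`. -/
theorem statement_5 {K : Type*} [Field K] {Λ : Type*} [AddCommGroup Λ] [LinearOrder Λ] [IsOrderedAddMonoid Λ]
    (v : FieldVal K Λ) (μ : Polynomial K → WithTop Λ) (hμ : IsValT v μ)
    (hin : IsInnerNode μ) :
    ((∀ ν : Polynomial K → WithTop Λ, IsValT v ν → μ < ν → TanRel v μ ν ν) ∧
     (∀ ν ν' : Polynomial K → WithTop Λ, IsValT v ν → IsValT v ν' → μ < ν → μ < ν' →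
        TanRel v μ ν ν' → TanRel v μ ν' ν) ∧
     (∀ ν ν' ν'' : Polynomial K → WithTop Λ, IsValT v ν → IsValT v ν' → IsValT v ν'' →
        μ < ν → μ < ν' → μ < ν'' →
        TanRel v μ ν ν' → TanRel v μ ν' ν'' → TanRel v μ ν ν'')) ∧
    (∀ φ : Polynomial K, IsKeyPol μ φ → ∀ γ γ' : WithTop Λ, μ φ < γ → μ φ < γ' →
      TanRel v μ (augVal μ φ γ) (augVal μ φ γ')) ∧
    (∀ ν : Polynomial K → WithTop Λ, IsValT v ν → μ < ν →
      ∃ φ : Polynomial K, IsKeyPol μ φ ∧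
        ∀ γ : WithTop Λ, μ φ < γ → TanRel v μ (augVal μ φ γ) ν) ∧
    (∀ φ φ' : Polynomial K, IsKeyPol μ φ → IsKeyPol μ φ' →
      ((∃ γ γ' : WithTop Λ, μ φ < γ ∧ μ φ' < γ' ∧
          TanRel v μ (augVal μ φ γ) (augVal μ φ' γ')) ↔ MuEquiv μ φ φ')) := by
  open MLVAux in
  refine ⟨⟨?_, ?_, ?_⟩, ?_, ?_, ?_⟩
  · -- reflexivity
    intro ν hν hlt
    exact ⟨ν, hν, hlt, le_rfl, le_rfl⟩
  · -- symmetry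
    rintro ν ν' _ _ _ _ ⟨ρ, h1, h2, h3, h4⟩
    exact ⟨ρ, h1, h2, h4, h3⟩
  · -- transitivity
    rintro ν ν' ν'' hν hν' hν'' hμν hμν' hμν'' ⟨ρ, hρT, hμρ, hρν, hρν'⟩
      ⟨σ, hσT, hμσ, hσν', hσν''⟩
    obtain ⟨φ, htd⟩ := td_nonempty hμ hν' hμν'
    have hk := kp_of_td hμ hν' (le_of_lt hμν') htd
    have hρφ := td_inc_all hμ hν' hρT (le_of_lt hμν') htd hμρ hρν'
    have hσφ := td_inc_all hμ hν' hσT (le_of_lt hμν') htd hμσ hσν'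
    have hδ : μ φ < min (ρ φ) (σ φ) := lt_min hρφ hσφ
    refine ⟨augVal μ φ (min (ρ φ) (σ φ)), augVal_isValT hμ hk hδ,
      mu_lt_augVal hμ hk.1 hk.2.1 hδ, ?_, ?_⟩
    · refine le_trans (Pi.le_def.mpr fun f => ?_) hρν
      exact augVal_le_of hμ hρT hk.1 hk.2.1.1 (fun g => (le_of_lt hμρ) g) (min_le_left _ _) f
    · refine le_trans (Pi.le_def.mpr fun f => ?_) hσν''
      exact augVal_le_of hμ hσT hk.1 hk.2.1.1 (fun g => (le_of_lt hμσ) g) (min_le_right _ _) f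
  · -- independence of γ
    intro φ hk γ γ' hγ hγ'
    have hδ : μ φ < min γ γ' := lt_min hγ hγ'
    exact ⟨augVal μ φ (min γ γ'), augVal_isValT hμ hk hδ,
      mu_lt_augVal hμ hk.1 hk.2.1 hδ,
      Pi.le_def.mpr fun f => augVal_mono_gamma (min_le_left _ _) f,
      Pi.le_def.mpr fun f => augVal_mono_gamma (min_le_right _ _) f⟩
  · -- surjectivity
    intro ν hν hlt
    obtain ⟨φ, htd⟩ := td_nonempty hμ hν hlt
    have hk := kp_of_td hμ hν (le_of_lt hlt) htd
    refine ⟨φ, hk, fun γ hγ => ?_⟩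
    have hδ : μ φ < min γ (ν φ) := lt_min hγ htd.2.1
    exact ⟨augVal μ φ (min γ (ν φ)), augVal_isValT hμ hk hδ,
      mu_lt_augVal hμ hk.1 hk.2.1 hδ,
      Pi.le_def.mpr fun f => augVal_mono_gamma (min_le_left _ _) f,
      Pi.le_def.mpr fun f =>
        augVal_le_of hμ hν hk.1 hk.2.1.1 (fun g => (le_of_lt hlt) g) (min_le_right _ _) f⟩
  · -- fibres
    intro φ φ' hk hk'
    constructor
    · rintro ⟨γ, γ', hγ, hγ', ρ, hρT, hμρ, hρ1, hρ2⟩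
      have hν₁T : IsValT v (augVal μ φ γ) := augVal_isValT hμ hk hγ
      have hν₂T : IsValT v (augVal μ φ' γ') := augVal_isValT hμ hk' hγ'
      have htd1 := augVal_td hμ hk hγ
      have htd2 := augVal_td hμ hk' hγ'
      have hμν₁ : μ < augVal μ φ γ := mu_lt_augVal hμ hk.1 hk.2.1 hγ
      have hμν₂ : μ < augVal μ φ' γ' := mu_lt_augVal hμ hk'.1 hk'.2.1 hγ'
      have hρφ : μ φ < ρ φ := td_inc_all hμ hν₁T hρT (le_of_lt hμν₁) htd1 hμρ hρ1
      have hρφ' : μ φ' < ρ φ' := td_inc_all hμ hν₂T hρT (le_of_lt hμν₂) htd2 hμρ hρ2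
      have hdeg : φ.natDegree = φ'.natDegree := by
        apply le_antisymm
        · exact htd1.2.2 φ' hk'.1 (lt_of_lt_of_le hρφ' (hρ1 φ'))
        · exact htd2.2.2 φ hk.1 (lt_of_lt_of_le hρφ (hρ2 φ))
      rcases eq_or_ne φ φ' with rfl | hne
      · unfold MuEquiv
        rw [sub_self, mu_zero hμ]
        exact lt_top_iff_ne_top.mpr hk.2.2.1
      have hdegree : φ.degree = φ'.degree := by
        rw [degree_eq_natDegree hk.1.ne_zero, degree_eq_natDegree hk'.1.ne_zero]
        exact_mod_cast hdeg
      have hsublt : (φ - φ').degree < φ.degree :=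
        degree_sub_lt hdegree hk.1.ne_zero
          (by rw [hk.1.leadingCoeff, hk'.1.leadingCoeff])
      have hsub0 : φ - φ' ≠ 0 := sub_ne_zero.mpr hne
      have hρh : ρ (φ - φ') = μ (φ - φ') := by
        rcases eq_or_ne (ρ (φ - φ')) (μ (φ - φ')) with h | h
        · exact h
        · exfalso
          have hinc : μ (φ - φ') < ρ (φ - φ') :=
            lt_of_le_of_ne ((le_of_lt hμρ) _) (Ne.symm h)
          obtain ⟨h1, hm1, hd1, hinc1⟩ := monicize hμ hρT hsub0 hinc
          have h2 : μ h1 < augVal μ φ γ h1 := lt_of_lt_of_le hinc1 (hρ1 h1)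
          have h3 := htd1.2.2 h1 hm1 h2
          have h4 : (φ - φ').natDegree < φ.natDegree :=
            natDegree_lt_natDegree hsub0 hsublt
          omega
      have hmin2 : min (ρ φ) (ρ φ') ≤ μ (φ - φ') := by
        rw [← hρh]
        have heq : φ - φ' = φ + -φ' := by ring
        calc min (ρ φ) (ρ φ') = min (ρ φ) (ρ (-φ')) := by rw [mu_neg hρT]
          _ ≤ ρ (φ + -φ') := mu_min_le hρT _ _
          _ = ρ (φ - φ') := by rw [← heq]
      have hgt : min (μ φ) (μ φ') < μ (φ - φ') :=
        lt_of_lt_of_le (lt_min (lt_of_le_of_lt (min_le_left _ _) hρφ)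
          (lt_of_le_of_lt (min_le_right _ _) hρφ')) hmin2
      have heqv : μ φ = μ φ' := by
        by_contra hneq
        have h5 : μ φ ≠ μ (-φ') := by rwa [mu_neg hμ]
        have h6 : μ (φ - φ') = min (μ φ) (μ φ') := by
          have heq : φ - φ' = φ + -φ' := by ring
          rw [heq, mu_add_eq_min hμ h5, mu_neg hμ]
        rw [h6] at hgt
        exact absurd hgt (lt_irrefl _)
      unfold MuEquiv
      calc μ φ = min (μ φ) (μ φ') := by rw [heqv, min_self]
        _ < μ (φ - φ') := hgt
    · intro heqv
      unfold MuEquiv at heqv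
      have hφtop : μ φ ≠ ⊤ := hk.2.2.1
      have hφ'top : μ φ' ≠ ⊤ := hk'.2.2.1
      have hμeq : μ φ' = μ φ := by
        have h1 : min (μ φ) (μ (φ - φ')) ≤ μ φ' := by
          have heq : φ' = φ + -(φ - φ') := by ring
          calc min (μ φ) (μ (φ - φ')) = min (μ φ) (μ (-(φ - φ'))) := by rw [mu_neg hμ]
            _ ≤ μ (φ + -(φ - φ')) := mu_min_le hμ _ _
            _ = μ φ' := by rw [← heq]
        rw [min_eq_left heqv.le] at h1
        have h2 : min (μ φ') (μ (φ - φ')) ≤ μ φ := by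
          have heq : φ = φ' + (φ - φ') := by ring
          calc min (μ φ') (μ (φ - φ')) ≤ μ (φ' + (φ - φ')) := mu_min_le hμ _ _
            _ = μ φ := by rw [← heq]
        rcases le_or_gt (μ φ') (μ φ) with h | h
        · exact le_antisymm h h1
        · exfalso
          have h3 : μ φ < min (μ φ') (μ (φ - φ')) := lt_min h heqv
          exact absurd h2 (not_le.mpr h3)
      have hdegree : φ.degree = φ'.degree := by
        rcases lt_trichotomy φ.degree φ'.degree with h | h | h
        · exfalso
          have hdvd : MuDvd μ φ' φ := by
            refine ⟨1, ?_⟩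
            unfold MuEquiv
            rw [one_mul]
            exact heqv
          exact hk'.2.1.2 φ hk.1.ne_zero h hdvd
        · exact h
        · exfalso
          have hdvd : MuDvd μ φ φ' := by
            refine ⟨1, ?_⟩
            unfold MuEquiv
            rw [one_mul, mu_sub_comm hμ, hμeq]
            exact heqv
          exact hk.2.1.2 φ' hk'.1.ne_zero h hdvd
      refine ⟨⊤, ⊤, lt_top_iff_ne_top.mpr hφtop, lt_top_iff_ne_top.mpr hφ'top, ?_⟩
      have hν₂T : IsValT v (augVal μ φ' ⊤) :=
        augVal_isValT hμ hk' (lt_top_iff_ne_top.mpr hφ'top)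
      have hφbound : μ (φ - φ') ≤ augVal μ φ' ⊤ φ := by
        rcases eq_or_ne φ φ' with rfl | hne
        · rw [augVal_phi hμ hk'.1 hk'.2.1.1 ⊤]
          exact le_top
        · have hsublt' : (φ - φ').degree < φ'.degree := by
            rw [← hdegree]
            exact degree_sub_lt hdegree hk.1.ne_zero
              (by rw [hk.1.leadingCoeff, hk'.1.leadingCoeff])
          have h1 : augVal μ φ' ⊤ (φ - φ') = μ (φ - φ') :=
            augVal_of_degree_lt hμ hk'.1 hk'.2.1.1 hsublt' ⊤
          have heq : φ = φ' + (φ - φ') := by ring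
          calc μ (φ - φ') = min (augVal μ φ' ⊤ φ') (augVal μ φ' ⊤ (φ - φ')) := by
                rw [h1, augVal_phi hμ hk'.1 hk'.2.1.1 ⊤]
                rw [min_eq_right le_top]
            _ ≤ augVal μ φ' ⊤ (φ' + (φ - φ')) := mu_min_le hν₂T _ _
            _ = augVal μ φ' ⊤ φ := by rw [← heq]
      exact ⟨augVal μ φ (μ (φ - φ')), augVal_isValT hμ hk heqv,
        mu_lt_augVal hμ hk.1 hk.2.1 heqv,
        Pi.le_def.mpr fun f => augVal_mono_gamma le_top f,
        Pi.le_def.mpr fun f => augVal_le_of hμ hν₂T hk.1 hk.2.1.1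
          (fun g => mu_le_augVal hμ hk'.1 hk'.2.1 le_top g) hφbound f⟩
end

section
/- Let A = (ρ_i)_{i∈A} be a totally ordered family in T. Then every polynomial f ∈ K[x] which is not A-stable satisfies deg(f) ≥ deg(ρ_i) for all i ∈ A. -/
open Polynomial

namespace MLV

section Aux

variable {K : Type*} [Field K] {Λ : Type*} [AddCommGroup Λ] [LinearOrder Λ] [IsOrderedAddMonoid Λ]
  {v : FieldVal K Λ} {μ ν : Polynomial K → WithTop Λ}

lemma IsValT.one' (h : IsValT v μ) : μ 1 = 0 := h.1
lemma IsValT.zero' (h : IsValT v μ) : μ 0 = ⊤ := h.2.1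
lemma IsValT.mul' (h : IsValT v μ) (f g : Polynomial K) : μ (f * g) = μ f + μ g := h.2.2.1 f g
lemma IsValT.add' (h : IsValT v μ) (f g : Polynomial K) : min (μ f) (μ g) ≤ μ (f + g) :=
  h.2.2.2.1 f g
lemma IsValT.c' (h : IsValT v μ) (a : K) : μ (C a) = v.v a := h.2.2.2.2 a

private lemma wt_add_self {a : WithTop Λ} (h : a + a = 0) : a = 0 := by
  cases a with
  | top => simp at h
  | coe a =>
    have ha : a + a = 0 := by exact_mod_cast h
    rcases lt_trichotomy a 0 with h' | h' | h'
    · have := add_lt_add h' h'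
      rw [ha, add_zero] at this
      exact absurd this (lt_irrefl 0)
    · simp [h']
    · have := add_lt_add h' h'
      rw [ha, add_zero] at this
      exact absurd this (lt_irrefl 0)

lemma IsValT.neg' (h : IsValT v μ) (g : Polynomial K) : μ (-g) = μ g := by
  have hc : μ (C (-1 : K)) = 0 := by
    apply wt_add_self
    rw [← h.mul']
    have e : (C (-1 : K)) * C (-1 : K) = 1 := by
      rw [← C_mul]; norm_num
    rw [e, h.one']
  have hg : (-g) = C (-1 : K) * g := by simp
  rw [hg, h.mul', hc, zero_add]

lemma IsValT.sub' (h : IsValT v μ) (f g : Polynomial K) : min (μ f) (μ g) ≤ μ (f - g) := by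
  have := h.add' f (-g)
  rwa [h.neg', ← sub_eq_add_neg] at this

/-- If `μ a < μ b` then `μ (a + b) = μ a`. -/
lemma IsValT.add_eq_left (hμ : IsValT v μ) {a b : Polynomial K} (h : μ a < μ b) :
    μ (a + b) = μ a := by
  refine le_antisymm ?_ ?_
  · by_contra hcon
    push_neg at hcon
    have h2 := hμ.sub' (a + b) b
    have e : (a + b) - b = a := by ring
    rw [e] at h2
    exact absurd ((lt_min hcon h).trans_le h2) (lt_irrefl _)
  · have := hμ.add' a b
    rwa [min_eq_left h.le] at this

private lemma wt_add_lt {a b c d : WithTop Λ} (h1 : a < b) (h2 : c ≤ d) (hc : c ≠ ⊤) :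
    a + c < b + d :=
  lt_of_lt_of_le (WithTop.add_lt_add_right hc h1) (add_le_add_right h2 b)

lemma monicize (v : FieldVal K Λ) {h : Polynomial K} (hh : h ≠ 0) :
    ∃ g : Polynomial K, g.Monic ∧ g.natDegree = h.natDegree ∧
      ∀ μ : Polynomial K → WithTop Λ, IsValT v μ → μ h = μ g + v.v h.leadingCoeff := by
  refine ⟨h * C h.leadingCoeff⁻¹, monic_mul_leadingCoeff_inv hh, ?_, ?_⟩
  · rw [natDegree_mul_C (inv_ne_zero (leadingCoeff_ne_zero.mpr hh))]
  · intro μ hμ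
    have heq : h = (h * C h.leadingCoeff⁻¹) * C h.leadingCoeff := by
      rw [mul_assoc, ← C_mul, inv_mul_cancel₀ (leadingCoeff_ne_zero.mpr hh), C_1, mul_one]
    conv_lhs => rw [heq]
    rw [hμ.mul', hμ.c']

/-- The single-pair lemma: if `μ ≤ ν` in `T` and `μ f < ν f`, then `deg f ≥ deg μ`. -/
lemma degOf_le_of_lt (hμ : IsValT v μ) (hν : IsValT v ν) (hle : ∀ g, μ g ≤ ν g)
    {f : Polynomial K} (hf : μ f < ν f) : degOf μ ≤ f.natDegree := by
  have hf0 : f ≠ 0 := by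
    rintro rfl
    rw [hμ.zero', hν.zero'] at hf
    exact absurd hf (lt_irrefl _)
  set S : Set ℕ := {n | ∃ g : Polynomial K, g.Monic ∧ μ g < ν g ∧ g.natDegree = n} with hS
  obtain ⟨g₀, hg₀m, hg₀d, hg₀v⟩ := monicize v hf0
  have hg₀lt : μ g₀ < ν g₀ := by
    rcases lt_or_ge (μ g₀) (ν g₀) with h' | h'
    · exact h'
    · exfalso
      have heq : μ g₀ = ν g₀ := le_antisymm (hle g₀) h'
      rw [hg₀v μ hμ, hg₀v ν hν, heq] at hf
      exact absurd hf (lt_irrefl _)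
  have hSne : S.Nonempty := ⟨g₀.natDegree, g₀, hg₀m, hg₀lt, rfl⟩
  obtain ⟨φ, hφm, hφlt, hφd⟩ := Nat.sInf_mem hSne
  set n₀ := sInf S with hn₀
  -- every polynomial of degree < n₀ takes equal values under μ and ν
  have agree : ∀ h : Polynomial K, h.natDegree < n₀ → μ h = ν h := by
    intro h hd
    by_cases hh0 : h = 0
    · rw [hh0, hμ.zero', hν.zero']
    obtain ⟨g, hgm, hgd, hgv⟩ := monicize v hh0
    have hgeq : μ g = ν g := by
      rcases eq_or_lt_of_le (hle g) with h' | h'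
      · exact h'
      · exfalso
        have hmem : n₀ ≤ g.natDegree := by
          rw [hn₀]; exact Nat.sInf_le ⟨g, hgm, h', rfl⟩
        rw [hgd] at hmem
        exact absurd hd (not_lt.mpr hmem)
    rw [hgv μ hμ, hgv ν hν, hgeq]
  have hφ0 : 0 < φ.natDegree := by
    rcases Nat.eq_zero_or_pos φ.natDegree with h' | h'
    · exfalso
      have : φ = 1 := hφm.natDegree_eq_zero.mp h'
      rw [this, hμ.one', hν.one'] at hφlt
      exact absurd hφlt (lt_irrefl _)
    · exact h'
  -- Claim A : μ-divisibility by φ forces a value jump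
  have claimA : ∀ g : Polynomial K, MuDvd μ φ g → μ g < ν g := by
    rintro g ⟨q, hq⟩
    have hgt : μ g ≠ ⊤ := ne_top_of_lt hq
    have e1 : (g - q * φ) + q * φ = g := by ring
    have hqφ : μ (q * φ) = μ g := by
      refine le_antisymm ?_ ?_
      · by_contra hcon
        push_neg at hcon
        have h2 := hμ.add' (g - q * φ) (q * φ)
        rw [e1] at h2
        exact absurd ((lt_min hq hcon).trans_le h2) (lt_irrefl _)
      · have e2 : q * φ = g - (g - q * φ) := by ring
        have h2 := hμ.sub' g (g - q * φ)
        rw [← e2] at h2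
        exact le_trans (le_min (le_refl _) hq.le) h2
    have hqt : μ q ≠ ⊤ ∧ μ φ ≠ ⊤ := by
      rw [← WithTop.add_ne_top, ← hμ.mul', hqφ]
      exact hgt
    have hνqφ : μ g < ν (q * φ) := by
      have hsum : μ q + μ φ < ν q + ν φ := by
        rw [add_comm (μ q), add_comm (ν q)]
        exact wt_add_lt hφlt (hle q) hqt.1
      calc μ g = μ (q * φ) := hqφ.symm
        _ = μ q + μ φ := hμ.mul' q φ
        _ < ν q + ν φ := hsum
        _ = ν (q * φ) := (hν.mul' q φ).symm
    have hνrest : μ g < ν (g - q * φ) := lt_of_lt_of_le hq (hle _)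
    have h2 := hν.add' (g - q * φ) (q * φ)
    rw [e1] at h2
    exact (lt_min hνrest hνqφ).trans_le h2
  -- Claim B : a value jump forces μ-divisibility by φ
  have claimB : ∀ g : Polynomial K, μ g < ν g → MuDvd μ φ g := by
    intro g hg
    set r := g %ₘ φ with hr
    set q := g /ₘ φ with hq
    have hdecomp : r + φ * q = g := modByMonic_add_div g φ
    have hrdeg : r.natDegree < n₀ := by
      by_cases hr0 : r = 0
      · rw [hr0, natDegree_zero, ← hφd]
        exact hφ0
      · have hdlt := degree_modByMonic_lt g hφm
        rw [← hφd]
        exact natDegree_lt_natDegree hr0 hdlt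
    have hragree : μ r = ν r := agree r hrdeg
    have key : μ g < μ r := by
      by_contra hcon
      push_neg at hcon
      have hq0 : q ≠ 0 := by
        intro hq00
        rw [hq00, mul_zero, add_zero] at hdecomp
        rw [← hdecomp, hragree] at hg
        exact absurd hg (lt_irrefl _)
      have hνr : ν r < ν g := lt_of_le_of_lt (hragree ▸ hcon) hg
      have hφq : φ * q = g - r := by rw [← hdecomp]; ring
      have hgr : g - φ * q = r := by rw [← hdecomp]; ring
      have hub : ν (φ * q) ≤ ν r := by
        by_contra hcon2
        push_neg at hcon2
        have h2 := hν.sub' g (φ * q)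
        rw [hgr] at h2
        exact absurd ((lt_min hνr hcon2).trans_le h2) (lt_irrefl _)
      have hlb : ν r ≤ ν (φ * q) := by
        have h2 := hν.sub' g r
        rw [← hφq] at h2
        exact le_trans (le_min hνr.le (le_refl _)) h2
      have hνφq : ν (φ * q) = ν r := le_antisymm hub hlb
      have hνφqt : ν (φ * q) ≠ ⊤ := by
        rw [hνφq, ← hragree]
        exact ne_top_of_le_ne_top (ne_top_of_lt hg) hcon
      have hqt : ν φ ≠ ⊤ ∧ ν q ≠ ⊤ := by
        rw [← WithTop.add_ne_top, ← hν.mul']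
        exact hνφqt
      have hμφq : μ (φ * q) < μ r := by
        rw [hμ.mul']
        calc μ φ + μ q < ν φ + ν q :=
              wt_add_lt hφlt (hle q) (fun ht => hqt.2 (top_le_iff.mp (ht ▸ hle q)))
          _ = ν (φ * q) := (hν.mul' φ q).symm
          _ = ν r := hνφq
          _ = μ r := hragree.symm
      have hgeq : μ g = μ (φ * q) := by
        rw [← hdecomp, add_comm, hμ.add_eq_left hμφq]
      rw [hgeq] at hcon
      exact absurd (hμφq.trans_le hcon) (lt_irrefl _)
    refine ⟨q, ?_⟩
    have e : g - q * φ = r := by rw [← hdecomp]; ring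
    rw [MuEquiv, e]
    exact key
  -- φ is a key polynomial for μ
  have hKP : IsKeyPol μ φ := by
    refine ⟨hφm, ⟨hφ0, ?_⟩, ne_top_of_lt hφlt, ?_, ?_⟩
    · intro f' hf'0 hf'deg hdvd
      have hlt' := claimA f' hdvd
      have hd' : f'.natDegree < n₀ := by
        rw [← hφd]
        exact natDegree_lt_natDegree hf'0 hf'deg
      rw [agree f' hd'] at hlt'
      exact absurd hlt' (lt_irrefl _)
    · rintro ⟨q, hq⟩
      rw [MuEquiv] at hq
      have h0 : μ (q * φ) = 0 := by
        have hlt' : μ (q * φ) < μ (-(q * φ - 1)) := by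
          rw [hμ.neg']; exact hq
        have h2 := hμ.add_eq_left hlt'
        have heq : q * φ + -(q * φ - 1) = 1 := by ring
        rw [heq, hμ.one'] at h2
        exact h2.symm
      have hqt : μ q ≠ ⊤ ∧ μ φ ≠ ⊤ := by
        rw [← WithTop.add_ne_top, ← hμ.mul', h0]
        exact WithTop.zero_ne_top
      have h1 : (0 : WithTop Λ) < ν (q * φ) := by
        calc (0 : WithTop Λ) = μ (q * φ) := h0.symm
          _ = μ q + μ φ := hμ.mul' q φ
          _ < ν q + ν φ := by
              rw [add_comm (μ q), add_comm (ν q)]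
              exact wt_add_lt hφlt (hle q) hqt.1
          _ = ν (q * φ) := (hν.mul' q φ).symm
      have h2 : (0 : WithTop Λ) < ν (q * φ - 1) := by
        calc (0 : WithTop Λ) = μ (q * φ) := h0.symm
          _ < μ (q * φ - 1) := hq
          _ ≤ ν (q * φ - 1) := hle _
      have h3 := hν.sub' (q * φ) (q * φ - 1)
      have heq : q * φ - (q * φ - 1) = 1 := by ring
      rw [heq] at h3
      have : (0 : WithTop Λ) < ν 1 := (lt_min h1 h2).trans_le h3
      rw [hν.one'] at this
      exact absurd this (lt_irrefl _)
    · intro a b hdvd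
      have hab := claimA _ hdvd
      rw [hμ.mul', hν.mul'] at hab
      have hor : μ a < ν a ∨ μ b < ν b := by
        by_contra hcon
        push_neg at hcon
        have ha : μ a = ν a := le_antisymm (hle a) hcon.1
        have hb : μ b = ν b := le_antisymm (hle b) hcon.2
        rw [ha, hb] at hab
        exact absurd hab (lt_irrefl _)
      rcases hor with h' | h'
      · exact Or.inl (claimB a h')
      · exact Or.inr (claimB b h')
  calc degOf μ ≤ φ.natDegree := Nat.sInf_le ⟨φ, hKP, rfl⟩
    _ = n₀ := hφd
    _ ≤ g₀.natDegree := by rw [hn₀]; exact Nat.sInf_le ⟨g₀, hg₀m, hg₀lt, rfl⟩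
    _ = f.natDegree := hg₀d

end Aux

end MLV

open MLV

/-- Every `A`-unstable polynomial `f` satisfies `deg(f) ≥ deg(ρ_i)` for all `i`. -/
theorem statement_6 {K : Type*} [Field K] {Λ : Type*} [AddCommGroup Λ] [LinearOrder Λ] [IsOrderedAddMonoid Λ] {ι : Type*} [LinearOrder ι] [Nonempty ι]
    (v : FieldVal K Λ) (ρ : ι → Polynomial K → WithTop Λ) (hA : IsTOFamily v ρ)
    (f : Polynomial K) (hf : ¬ IsStablePoly ρ f) :
    ∀ i : ι, degOf (ρ i) ≤ f.natDegree := by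
  obtain ⟨hval, hinner, hmono, hcof⟩ := hA
  rw [IsStablePoly] at hf
  push_neg at hf
  intro i
  obtain ⟨j, hij, hne⟩ := hf i
  have hle : ∀ g, ρ i g ≤ ρ j g := by
    rcases eq_or_lt_of_le hij with rfl | hlt
    · exact fun g => le_refl _
    · exact fun g => (hmono.monotone hlt.le) g
  have hlt : ρ i f < ρ j f := lt_of_le_of_ne (hle f) hne.symm
  exact degOf_le_of_lt (hval i) (hval j) hle hlt
end
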